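/- arXiv:2405.01766 — 9 statements merged into one kernel-verified Lean document; each statement's English description precedes it below -/
import Mathlib

section
/- Let (p,q) be a Hölder conjugate pair with p > 1 and q > 1. For each i ∈ ℕ let a_i = (a_{i,j})_{j=1}^∞ ∈ ℓ^p and let b_i be a scalar, and consider the linear equation L_i(x) = ∑_{j=1}^∞ a_{i,j} x_j = b_i. Let M > 0. If for every finite subset S of ℕ there exists x_S ∈ ℓ^q with ‖x_S‖_q ≤ M and L_i(x_S) = b_i for all i ∈ S, then there exists x ∈ ℓ^q with ‖x‖_q ≤ M and L_i(x) = b_i for all i ∈ ℕ. -/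
set_option maxHeartbeats 1000000


open scoped ENNReal
open Filter Topology

/-- **Abian–Eslami theorem.** Let `(p,q)` be a Hölder conjugate pair with `p > 1` and
`q > 1`.  For each `i ∈ ℕ` let `a i ∈ ℓ^p` and consider the linear equation
`L_i(x) = ∑' j, a i j * x j = b i`.  If for every finite subset `S` of `ℕ` there is
`x_S ∈ ℓ^q` with `‖x_S‖_q ≤ M` solving the equations indexed by `S`, then there is
`x ∈ ℓ^q` with `‖x‖_q ≤ M` solving all of the equations. -/
theorem abian_eslami {𝕜 : Type*} [RCLike 𝕜] (p q : ℝ≥0∞)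
    (hp : 1 < p) (hp' : p ≠ ∞) (hq : 1 < q) (hq' : q ≠ ∞)
    (hpq : 1 / p + 1 / q = 1)
    (a : ℕ → ℕ → 𝕜) (ha : ∀ i, Memℓp (a i) p) (b : ℕ → 𝕜)
    (M : ℝ) (hM : 0 < M)
    (hfin : ∀ S : Finset ℕ, ∃ x : lp (fun _ : ℕ => 𝕜) q,
      ‖x‖ ≤ M ∧ ∀ i ∈ S, ∑' j : ℕ, a i j * x j = b i) :
    ∃ x : lp (fun _ : ℕ => 𝕜) q, ‖x‖ ≤ M ∧ ∀ i : ℕ, ∑' j : ℕ, a i j * x j = b i := by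
  classical
  have hp0 : p ≠ 0 := (zero_lt_one.trans hp).ne'
  have hq0 : q ≠ 0 := (zero_lt_one.trans hq).ne'
  have hpq' : p.toReal.HolderConjugate q.toReal := by
    constructor
    · have h := congrArg ENNReal.toReal hpq
      rw [ENNReal.toReal_add (by simp [hp0]) (by simp [hq0])] at h
      simpa [ENNReal.toReal_inv, one_div] using h
    · exact ENNReal.toReal_pos hp0 hp'
    · exact ENNReal.toReal_pos hq0 hq'
  have hpr : 0 < p.toReal := hpq'.pos
  have hqr : 0 < q.toReal := hpq'.symm.pos
  set K : Set (ℕ → 𝕜) := {f | ∀ s : Finset ℕ, ∑ j ∈ s, ‖f j‖ ^ q.toReal ≤ M ^ q.toReal}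
    with hKdef
  -- membership in `K` from an `lp` element with norm at most `M`
  have memK : ∀ x : lp (fun _ : ℕ => 𝕜) q, ‖x‖ ≤ M → (x : ℕ → 𝕜) ∈ K := by
    intro x hx s
    exact le_trans (lp.sum_rpow_le_norm_rpow hqr x s)
      (Real.rpow_le_rpow (lp.norm_nonneg' x) hx hqr.le)
  -- conversely membership in `K` yields an `lp` element with norm at most `M`
  have ofK : ∀ f ∈ K, ∃ hf : Memℓp f q, ‖(⟨f, hf⟩ : lp (fun _ : ℕ => 𝕜) q)‖ ≤ M := by
    intro f hf
    have hmem : Memℓp f q := memℓp_gen' (C := M ^ q.toReal) fun s => hf s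
    exact ⟨hmem, lp.norm_le_of_forall_sum_le hqr hM.le fun s => hf s⟩
  -- `K` is compact in the product topology
  have hKclosed : IsClosed K := by
    have hKeq : K = ⋂ s : Finset ℕ, {f : ℕ → 𝕜 | ∑ j ∈ s, ‖f j‖ ^ q.toReal ≤ M ^ q.toReal} := by
      ext f; simp [hKdef, Set.mem_iInter]
    rw [hKeq]
    refine isClosed_iInter fun s => isClosed_le ?_ continuous_const
    exact continuous_finset_sum _ fun j _ =>
      ((continuous_apply j).norm.rpow_const fun x => Or.inr hqr.le)
  have hKsub : K ⊆ Set.pi Set.univ fun _ : ℕ => Metric.closedBall (0 : 𝕜) M := by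
    intro f hf j _
    have h1 := hf {j}
    simp only [Finset.sum_singleton] at h1
    have h2 : ‖f j‖ ≤ M := (Real.rpow_le_rpow_iff (norm_nonneg _) hM.le hqr).1 h1
    simpa [Metric.mem_closedBall, dist_zero_right] using h2
  have hKcpt : IsCompact K :=
    IsCompact.of_isClosed_subset
      (isCompact_univ_pi fun _ => isCompact_closedBall 0 M) hKclosed hKsub
  -- the linear functionals
  set L : ℕ → (ℕ → 𝕜) → 𝕜 := fun i f => ∑' j, a i j * f j with hLdef
  -- each `L i` is continuous on `K`
  have hLcont : ∀ i, ContinuousOn (L i) K := by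
    intro i
    have haSum : Summable fun j => ‖a i j‖ ^ p.toReal := (ha i).summable hpr
    set A : ℕ → ℕ → 𝕜 := fun N j => if j < N then 0 else a i j with hAdef
    have hAmem : ∀ N, Memℓp (A N) p := by
      intro N
      refine memℓp_gen (haSum.of_nonneg_of_le
        (fun j => Real.rpow_nonneg (norm_nonneg _) _) fun j => ?_)
      refine Real.rpow_le_rpow (norm_nonneg _) ?_ hpr.le
      by_cases h : j < N <;> simp [hAdef, h]
    set Alp : ℕ → lp (fun _ : ℕ => 𝕜) p := fun N => ⟨A N, hAmem N⟩ with hAlpdef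
    have hAtail : ∀ N, ∑' j, ‖A N j‖ ^ p.toReal = ∑' j, ‖a i (j + N)‖ ^ p.toReal := by
      intro N
      have hsA : Summable fun j => ‖A N j‖ ^ p.toReal := (hAmem N).summable hpr
      rw [← Summable.sum_add_tsum_nat_add N hsA]
      have h0 : ∑ j ∈ Finset.range N, ‖A N j‖ ^ p.toReal = 0 := by
        refine Finset.sum_eq_zero fun j hj => ?_
        simp [hAdef, Finset.mem_range.1 hj, Real.zero_rpow hpr.ne']
      have h1 : ∀ j : ℕ, ¬(j + N < N) := fun j => by omega
      rw [h0]; simp [hAdef, h1]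
    have hAnorm : Tendsto (fun N => ‖Alp N‖) atTop (𝓝 0) := by
      have h1 : Tendsto (fun N => ∑' j, ‖a i (j + N)‖ ^ p.toReal) atTop (𝓝 0) :=
        tendsto_sum_nat_add fun j => ‖a i j‖ ^ p.toReal
      have h2 : Tendsto (fun N => (∑' j, ‖a i (j + N)‖ ^ p.toReal) ^ (1 / p.toReal))
          atTop (𝓝 0) := by
        have hcont : ContinuousAt (fun x : ℝ => x ^ (1 / p.toReal)) 0 :=
          Real.continuousAt_rpow_const 0 (1 / p.toReal) (Or.inr (by positivity))
        have := hcont.tendsto.comp h1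
        simpa [Function.comp_def, Real.zero_rpow (inv_ne_zero hpr.ne'), one_div] using this
      convert h2 using 2 with N
      rw [lp.norm_eq_tsum_rpow hpr (Alp N)]
      congr 1
      exact hAtail N
    -- uniform convergence of the partial sums on K
    have hunif : TendstoUniformlyOn
        (fun N f => ∑ j ∈ Finset.range N, a i j * f j) (L i) atTop K := by
      rw [Metric.tendstoUniformlyOn_iff]
      intro ε hε
      have hεM : 0 < ε / M := div_pos hε hM
      filter_upwards [hAnorm.eventually_lt_const hεM] with N hN f hfK
      obtain ⟨hfmem, hfM⟩ := ofK f hfK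
      set X : lp (fun _ : ℕ => 𝕜) q := ⟨f, hfmem⟩ with hXdef
      have hs : Summable fun j => ‖a i j‖ * ‖f j‖ :=
        lp.summable_mul hpq' (⟨a i, ha i⟩ : lp (fun _ : ℕ => 𝕜) p) X
      have hsum : Summable fun j => a i j * f j := by
        refine Summable.of_norm ?_
        simpa [norm_mul] using hs
      have key : L i f - ∑ j ∈ Finset.range N, a i j * f j
          = ∑' j, a i (j + N) * f (j + N) := by
        have h3 := Summable.sum_add_tsum_nat_add N hsum
        have h4 : L i f = (∑ j ∈ Finset.range N, a i j * f j)
            + ∑' j, a i (j + N) * f (j + N) := h3.symm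
        rw [h4]; ring
      have hsn : Summable fun j => ‖a i (j + N)‖ * ‖f (j + N)‖ :=
        (summable_nat_add_iff N).2 hs
      have htsum_eq : ∑' j, ‖A N j‖ * ‖f j‖ = ∑' j, ‖a i (j + N)‖ * ‖f (j + N)‖ := by
        have hsA : Summable fun j => ‖A N j‖ * ‖f j‖ :=
          lp.summable_mul hpq' (Alp N) X
        rw [← Summable.sum_add_tsum_nat_add N hsA]
        have h0 : ∑ j ∈ Finset.range N, ‖A N j‖ * ‖f j‖ = 0 := by
          refine Finset.sum_eq_zero fun j hj => ?_
          simp [hAdef, Finset.mem_range.1 hj]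
        have h1 : ∀ j : ℕ, ¬(j + N < N) := fun j => by omega
        rw [h0]; simp [hAdef, h1]
      calc dist (L i f) (∑ j ∈ Finset.range N, a i j * f j)
          = ‖∑' j, a i (j + N) * f (j + N)‖ := by rw [dist_eq_norm, key]
        _ ≤ ∑' j, ‖a i (j + N)‖ * ‖f (j + N)‖ := by
            have := norm_tsum_le_tsum_norm (f := fun j => a i (j + N) * f (j + N))
              (by simpa [norm_mul] using hsn)
            simpa [norm_mul] using this
        _ = ∑' j, ‖A N j‖ * ‖f j‖ := htsum_eq.symm
        _ ≤ ‖Alp N‖ * ‖X‖ := lp.tsum_mul_le_mul_norm' hpq' (Alp N) X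
        _ ≤ ‖Alp N‖ * M := mul_le_mul_of_nonneg_left hfM (lp.norm_nonneg' (Alp N))
        _ < (ε / M) * M := mul_lt_mul_of_pos_right hN hM
        _ = ε := div_mul_cancel₀ ε hM.ne'
    refine hunif.continuousOn ?_
    exact (Filter.Eventually.of_forall fun N =>
      (continuous_finset_sum _ fun j _ => (continuous_const.mul (continuous_apply j))).continuousOn).frequently
  -- the nested compact sets
  set T : ℕ → Set (ℕ → 𝕜) := fun n => ⋂ i ∈ Finset.range (n + 1), (K ∩ L i ⁻¹' {b i})
    with hTdef
  have hTclosed : ∀ n, IsClosed (T n) := fun n =>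
    isClosed_biInter fun i _ =>
      (hLcont i).preimage_isClosed_of_isClosed hKclosed isClosed_singleton
  have hTsubK : ∀ n, T n ⊆ K := by
    intro n f hf
    exact (Set.mem_iInter₂.1 hf 0 (Finset.mem_range.2 (Nat.succ_pos n))).1
  have hTne : ∀ n, (T n).Nonempty := by
    intro n
    obtain ⟨x, hxM, hxe⟩ := hfin (Finset.range (n + 1))
    refine ⟨x, Set.mem_iInter₂.2 fun i hi => ⟨memK x hxM, ?_⟩⟩
    simpa [hLdef] using hxe i hi
  have hTmono : ∀ n, T (n + 1) ⊆ T n := by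
    intro n f hf
    refine Set.mem_iInter₂.2 fun i hi => Set.mem_iInter₂.1 hf i ?_
    have := Finset.mem_range.1 hi
    exact Finset.mem_range.2 (by omega)
  obtain ⟨f, hf⟩ := IsCompact.nonempty_iInter_of_sequence_nonempty_isCompact_isClosed T
    hTmono hTne (IsCompact.of_isClosed_subset hKcpt (hTclosed 0) (hTsubK 0)) hTclosed
  have hfK : f ∈ K := hTsubK 0 (Set.mem_iInter.1 hf 0)
  obtain ⟨hfmem, hfM⟩ := ofK f hfK
  refine ⟨⟨f, hfmem⟩, hfM, fun i => ?_⟩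
  have h5 := Set.mem_iInter₂.1 (Set.mem_iInter.1 hf i) i
    (Finset.mem_range.2 (Nat.lt_succ_self i))
  simpa [hLdef] using h5.2
end

section
/- Let (p,q) be a Hölder conjugate pair and let I be an infinite set. For each i ∈ I let a_i = (a_{i,j})_{j=1}^∞ ∈ ℓ^p and let b_i be a scalar, and consider the linear equation L_i(x) = ∑_{j=1}^∞ a_{i,j} x_j = b_i. Let M > 0. If for every finite subset S of I and every ε > 0 the finite set of inequalities {|L_i(x) − b_i| ≤ ε : i ∈ S} has a solution x_{S,ε} ∈ ℓ^q with ‖x_{S,ε}‖_q ≤ M, then the infinite set of equations {L_i(x) = b_i : i ∈ I} has an exact solution x ∈ ℓ^q with ‖x‖_q ≤ M. -/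
set_option maxHeartbeats 1000000

open scoped ENNReal

open Filter

/-- `(p, q)` is a Hölder conjugate pair: either `p > 1` and `q > 1` are (finite) real
numbers with `1/p + 1/q = 1`, or `p = 1` and `q = ∞`. -/
def IsHolderConjugatePair (p q : ℝ≥0∞) : Prop :=
  (1 < p ∧ p ≠ ∞ ∧ 1 < q ∧ q ≠ ∞ ∧ 1 / p + 1 / q = 1) ∨ (p = 1 ∧ q = ∞)

/-- If partial sums converge uniformly (controlled by a vanishing tail bound `u`) on `C`,
then `x ↦ ∑' j, a j * x j` is continuous on `C` for the product topology. -/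
lemma linear_approx_contOn_tsum {𝕜 : Type*} [RCLike 𝕜] (a : ℕ → 𝕜) (C : Set (ℕ → 𝕜))
    (hsum : ∀ x ∈ C, Summable fun j => ‖a j‖ * ‖x j‖)
    (u : ℕ → ℝ) (hu : Tendsto u atTop (nhds 0))
    (htail : ∀ N, ∀ x ∈ C, ∑' j, ‖a (j + N)‖ * ‖x (j + N)‖ ≤ u N) :
    ContinuousOn (fun x : ℕ → 𝕜 => ∑' j, a j * x j) C := by
  apply TendstoUniformlyOn.continuousOn
    (F := fun N (x : ℕ → 𝕜) => ∑ j ∈ Finset.range N, a j * x j) (p := atTop)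
  · rw [Metric.tendstoUniformlyOn_iff]
    intro ε hε
    filter_upwards [hu.eventually (gt_mem_nhds hε)] with N hN x hx
    have hs : Summable fun j => a j * x j := by
      apply Summable.of_norm
      simpa [norm_mul] using hsum x hx
    have hrw := Summable.sum_add_tsum_nat_add N hs
    rw [dist_eq_norm, ← hrw, add_sub_cancel_left]
    have hsn : Summable fun j => ‖a (j + N)‖ * ‖x (j + N)‖ :=
      (summable_nat_add_iff N).2 (hsum x hx)
    calc ‖∑' j, a (j + N) * x (j + N)‖ ≤ ∑' j, ‖a (j + N) * x (j + N)‖ :=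
          norm_tsum_le_tsum_norm (by simpa [norm_mul] using hsn)
      _ = ∑' j, ‖a (j + N)‖ * ‖x (j + N)‖ := by simp [norm_mul]
      _ ≤ u N := htail N x hx
      _ < ε := hN
  · refine Filter.Frequently.of_forall fun N => ?_
    exact (continuous_finset_sum _ fun j _ =>
      (continuous_const.mul (continuous_apply j))).continuousOn

/-- The master compactness lemma: if `C` is a closed set of pointwise-bounded sequences
corresponding exactly to the closed ball of radius `M` in `ℓ^q`, on which each functional
`L i` is continuous, then approximate finite solvability implies exact solvability. -/
lemma linear_approx_master {𝕜 : Type*} [RCLike 𝕜] (q : ℝ≥0∞) {I : Type*}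
    (a : I → ℕ → 𝕜) (b : I → 𝕜) (M : ℝ)
    (C : Set (ℕ → 𝕜))
    (hCclosed : IsClosed C)
    (hCbdd : ∀ x ∈ C, ∀ j, ‖x j‖ ≤ M)
    (hCmem : ∀ x ∈ C, ∃ h : Memℓp x q, ‖(⟨x, h⟩ : lp (fun _ : ℕ => 𝕜) q)‖ ≤ M)
    (hlpC : ∀ x : lp (fun _ : ℕ => 𝕜) q, ‖x‖ ≤ M → ⇑x ∈ C)
    (hcont : ∀ i, ContinuousOn (fun x : ℕ → 𝕜 => ∑' j, a i j * x j) C)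
    (hfin : ∀ (S : Finset I) (ε : ℝ), 0 < ε →
      ∃ x : lp (fun _ : ℕ => 𝕜) q,
        ‖x‖ ≤ M ∧ ∀ i ∈ S, ‖(∑' j : ℕ, a i j * x j) - b i‖ ≤ ε) :
    ∃ x : lp (fun _ : ℕ => 𝕜) q, ‖x‖ ≤ M ∧ ∀ i : I, ∑' j : ℕ, a i j * x j = b i := by
  have hK : IsCompact {x : ℕ → 𝕜 | ∀ j, x j ∈ Metric.closedBall (0 : 𝕜) M} := by
    simpa [Set.setOf_forall] using isCompact_pi_infinite
      (fun j : ℕ => isCompact_closedBall (0 : 𝕜) M)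
  have hCcpt : IsCompact C := hK.of_isClosed_subset hCclosed (by
    intro x hx j
    simpa [Metric.mem_closedBall, dist_zero_right] using hCbdd x hx j)
  set L : I → (ℕ → 𝕜) → 𝕜 := fun i x => ∑' j, a i j * x j with hL
  set t : I × ℕ → Set (ℕ → 𝕜) := fun in' =>
    C ∩ (L in'.1) ⁻¹' Metric.closedBall (b in'.1) (1 / (in'.2 + 1)) with ht
  have htc : ∀ in', IsClosed (t in') := fun in' =>
    (hcont in'.1).preimage_isClosed_of_isClosed hCclosed Metric.isClosed_closedBall
  have hFIP : ∀ u : Finset (I × ℕ), (C ∩ ⋂ in' ∈ u, t in').Nonempty := by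
    intro u
    classical
    set N : ℕ := u.sup Prod.snd with hN
    obtain ⟨x, hxM, hxS⟩ := hfin (u.image Prod.fst) (1 / (N + 1)) (by positivity)
    refine ⟨⇑x, hlpC x hxM, ?_⟩
    simp only [Set.mem_iInter]
    rintro ⟨i, n⟩ hin
    refine ⟨hlpC x hxM, ?_⟩
    simp only [Set.mem_preimage, Metric.mem_closedBall, dist_eq_norm]
    refine le_trans (hxS i (Finset.mem_image_of_mem Prod.fst hin)) ?_
    have hn : (n : ℝ) ≤ N := by
      exact_mod_cast Finset.le_sup (f := Prod.snd) hin
    apply one_div_le_one_div_of_le (by positivity)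
    linarith
  obtain ⟨x, hxC, hxI⟩ := hCcpt.inter_iInter_nonempty t htc hFIP
  obtain ⟨hmem, hnorm⟩ := hCmem x hxC
  refine ⟨⟨x, hmem⟩, hnorm, fun i => ?_⟩
  have key : ∀ n : ℕ, ‖L i x - b i‖ ≤ 1 / (n + 1) := by
    intro n
    have := Set.mem_iInter.1 hxI (i, n)
    simpa [t, Metric.mem_closedBall, dist_eq_norm] using this.2
  have h0 : ‖L i x - b i‖ ≤ 0 :=
    ge_of_tendsto' tendsto_one_div_add_atTop_nhds_zero_nat key
  exact sub_eq_zero.1 (norm_le_zero_iff.1 h0)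

/-- Continuity of `x ↦ ∑' j, a j * x j` on the `ℓ^q`-ball set, finite conjugate case. -/
lemma linear_approx_contOn_finite {𝕜 : Type*} [RCLike 𝕜] (p q : ℝ≥0∞)
    (hpq : p.toReal.HolderConjugate q.toReal)
    (a : ℕ → 𝕜) (ha : Memℓp a p) (M : ℝ) (hM : 0 < M) :
    ContinuousOn (fun x : ℕ → 𝕜 => ∑' j, a j * x j)
      {x : ℕ → 𝕜 | ∀ s : Finset ℕ, ∑ j ∈ s, ‖x j‖ ^ q.toReal ≤ M ^ q.toReal} := by
  set C := {x : ℕ → 𝕜 | ∀ s : Finset ℕ, ∑ j ∈ s, ‖x j‖ ^ q.toReal ≤ M ^ q.toReal} with hC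
  have hp0 : 0 < p.toReal := hpq.pos
  have hq0 : 0 < q.toReal := hpq.symm.pos
  have hmem : ∀ x ∈ C, Memℓp x q := fun x hx => memℓp_gen' hx
  have haN : ∀ N, Memℓp (fun j => a (j + N)) p := fun N =>
    memℓp_gen ((summable_nat_add_iff N).2 (ha.summable hp0))
  set A : ℕ → lp (fun _ : ℕ => 𝕜) p := fun N => ⟨fun j => a (j + N), haN N⟩ with hA
  have hsum : ∀ x ∈ C, Summable fun j => ‖a j‖ * ‖x j‖ := fun x hx =>
    lp.summable_mul hpq ⟨a, ha⟩ ⟨x, hmem x hx⟩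
  refine linear_approx_contOn_tsum a C hsum (fun N => ‖A N‖ * M) ?_ ?_
  · have h1 : Tendsto (fun N => ∑' j, ‖a (j + N)‖ ^ p.toReal) atTop (nhds 0) :=
      tendsto_sum_nat_add (fun j => ‖a j‖ ^ p.toReal)
    have hcont0 : ContinuousAt (fun y : ℝ => y ^ (1 / p.toReal)) 0 :=
      Real.continuousAt_rpow_const 0 _ (Or.inr (by positivity))
    have h3 := (hcont0.tendsto.comp h1).mul_const M
    rw [Real.zero_rpow (by positivity), zero_mul] at h3
    simp only [Function.comp] at h3
    refine h3.congr fun N => ?_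
    have h2 : ‖A N‖ = (∑' j, ‖a (j + N)‖ ^ p.toReal) ^ (1 / p.toReal) :=
      lp.norm_eq_tsum_rpow hp0 (A N)
    rw [h2]
  · intro N x hx
    have hxq : Memℓp (fun j => x (j + N)) q :=
      memℓp_gen ((summable_nat_add_iff N).2 ((hmem x hx).summable hq0))
    set X : lp (fun _ : ℕ => 𝕜) q := ⟨fun j => x (j + N), hxq⟩ with hX
    have hXle : ‖X‖ ≤ M := by
      apply lp.norm_le_of_forall_sum_le hq0 hM.le
      intro s
      calc ∑ j ∈ s, ‖x (j + N)‖ ^ q.toReal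
          = ∑ j ∈ s.image (· + N), ‖x j‖ ^ q.toReal :=
            (Finset.sum_image (f := fun j => ‖x j‖ ^ q.toReal)
              (fun x _ y _ h => add_left_injective N h)).symm
        _ ≤ M ^ q.toReal := hx _
    calc ∑' j, ‖a (j + N)‖ * ‖x (j + N)‖
        ≤ ‖A N‖ * ‖X‖ := lp.tsum_mul_le_mul_norm' hpq (A N) X
      _ ≤ ‖A N‖ * M := mul_le_mul_of_nonneg_left hXle (lp.norm_nonneg' _)

/-- Let `(p,q)` be a Hölder conjugate pair and `I` an infinite set.  For each `i ∈ I`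
let `a i ∈ ℓ^p` and consider the linear equation `L_i(x) = ∑' j, a i j * x j = b i`.
If for every finite `S ⊆ I` and every `ε > 0` the inequalities `‖L_i(x) - b i‖ ≤ ε`
(`i ∈ S`) have a solution `x ∈ ℓ^q` with `‖x‖_q ≤ M`, then the full infinite system of
equations has an exact solution `x ∈ ℓ^q` with `‖x‖_q ≤ M`. -/
theorem linear_approx_implies_exact {𝕜 : Type*} [RCLike 𝕜] (p q : ℝ≥0∞)
    (hpq : IsHolderConjugatePair p q)
    (I : Type*) [Infinite I]
    (a : I → ℕ → 𝕜) (ha : ∀ i, Memℓp (a i) p) (b : I → 𝕜)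
    (M : ℝ) (hM : 0 < M)
    (hfin : ∀ (S : Finset I) (ε : ℝ), 0 < ε →
      ∃ x : lp (fun _ : ℕ => 𝕜) q,
        ‖x‖ ≤ M ∧ ∀ i ∈ S, ‖(∑' j : ℕ, a i j * x j) - b i‖ ≤ ε) :
    ∃ x : lp (fun _ : ℕ => 𝕜) q, ‖x‖ ≤ M ∧ ∀ i : I, ∑' j : ℕ, a i j * x j = b i := by
  rcases hpq with ⟨hp1, hpt, hq1, hqt, heq⟩ | ⟨hp1, hq1⟩
  · -- finite case
    have hp0 : p ≠ 0 := by positivity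
    have hq0 : q ≠ 0 := by positivity
    have hconj : p.toReal.HolderConjugate q.toReal := by
      rw [Real.holderConjugate_iff]
      constructor
      · rw [show (1 : ℝ) = (1 : ℝ≥0∞).toReal by simp]
        exact (ENNReal.toReal_lt_toReal ENNReal.one_ne_top hpt).2 hp1
      · have := congrArg ENNReal.toReal heq
        rw [ENNReal.toReal_add (by simp [hp0]) (by simp [hq0])] at this
        simpa [ENNReal.toReal_inv, one_div] using this
    have hq0' : 0 < q.toReal := hconj.symm.pos
    apply linear_approx_master q a b M
      {x : ℕ → 𝕜 | ∀ s : Finset ℕ, ∑ j ∈ s, ‖x j‖ ^ q.toReal ≤ M ^ q.toReal}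
    · rw [Set.setOf_forall]
      refine isClosed_iInter fun s => isClosed_le ?_ continuous_const
      exact continuous_finset_sum _ fun j _ =>
        ((continuous_apply j).norm).rpow_const fun x => Or.inr hq0'.le
    · intro x hx j
      have := hx {j}
      simp only [Finset.sum_singleton] at this
      exact (Real.rpow_le_rpow_iff (norm_nonneg _) hM.le hq0').1 this
    · intro x hx
      exact ⟨memℓp_gen' hx, lp.norm_le_of_forall_sum_le hq0' hM.le hx⟩
    · intro x hx s
      exact (lp.sum_rpow_le_norm_rpow hq0' x s).trans
        (Real.rpow_le_rpow (lp.norm_nonneg' x) hx hq0'.le)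
    · intro i
      exact linear_approx_contOn_finite p q hconj (a i) (ha i) M hM
    · exact hfin
  · -- p = 1, q = ∞
    subst hp1 hq1
    apply linear_approx_master ∞ a b M {x : ℕ → 𝕜 | ∀ j, ‖x j‖ ≤ M}
    · rw [Set.setOf_forall]
      exact isClosed_iInter fun j =>
        isClosed_le ((continuous_apply j).norm) continuous_const
    · exact fun x hx => hx
    · intro x hx
      have h : Memℓp x ∞ := memℓp_infty ⟨M, by rintro _ ⟨j, rfl⟩; exact hx j⟩
      exact ⟨h, lp.norm_le_of_forall_le hM.le hx⟩
    · exact fun x hx j => (lp.norm_apply_le_norm ENNReal.top_ne_zero x j).trans hx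
    · intro i
      have sa : Summable fun j => ‖a i j‖ := by
        simpa using (ha i).summable (by simp : 0 < (1 : ℝ≥0∞).toReal)
      have hsum : ∀ x ∈ {x : ℕ → 𝕜 | ∀ j, ‖x j‖ ≤ M},
          Summable fun j => ‖a i j‖ * ‖x j‖ := by
        intro x hx
        refine Summable.of_nonneg_of_le (fun j => by positivity) (fun j => ?_)
          (sa.mul_right M)
        exact mul_le_mul_of_nonneg_left (hx j) (norm_nonneg _)
      refine linear_approx_contOn_tsum (a i) _ hsum
        (fun N => (∑' j, ‖a i (j + N)‖) * M) ?_ ?_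
      · simpa using (tendsto_sum_nat_add fun j => ‖a i j‖).mul_const M
      · intro N x hx
        have h1 : Summable fun j => ‖a i (j + N)‖ * ‖x (j + N)‖ :=
          (summable_nat_add_iff N).2 (hsum x hx)
        have h2 : Summable fun j => ‖a i (j + N)‖ * M :=
          ((summable_nat_add_iff N).2 sa).mul_right M
        calc ∑' j, ‖a i (j + N)‖ * ‖x (j + N)‖ ≤ ∑' j, ‖a i (j + N)‖ * M :=
              Summable.tsum_le_tsum (fun j =>
                mul_le_mul_of_nonneg_left (hx (j + N)) (norm_nonneg _)) h1 h2
          _ = (∑' j, ‖a i (j + N)‖) * M := by rw [tsum_mul_right]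
    · exact hfin
end

section
/- Let D be a positive integer, let D < q ≤ ∞, and let I be an infinite set. For each i ∈ I and d ∈ {1,…,D} let a_{i,d} = (a_{i,d,j})_{j=1}^∞ ∈ ℓ^{q/(q−d)}, and let P_i(x) = ∑_{k=1}^D ∑_{(d_1,…,d_k) ∈ D_k} (a_{i,d_1}, x^{d_1})(a_{i,d_2}, x^{d_2})⋯(a_{i,d_k}, x^{d_k}) be the associated multiplicative polynomial, where (a_{i,d}, x^d) = ∑_{j=1}^∞ a_{i,d,j} x_j^d. Let M > 0 and let (b_i)_{i∈I} be scalars. If for every finite subset S of I the finite set of polynomial equations {P_i(x) = b_i : i ∈ S} has a solution x_S ∈ ℓ^q with ‖x_S‖_q ≤ M, then the infinite set of polynomial equations {P_i(x) = b_i : i ∈ I} has a solution x ∈ ℓ^q with ‖x‖_q ≤ M. -/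
open scoped ENNReal

/-- The exponent `q/(q-d)`, interpreted as `1` when `q = ∞`, so that `q/(q-d)` and
`q/d` form a Hölder conjugate pair whenever `d < q`. -/
noncomputable def holderExponent (q : ℝ≥0∞) (d : ℕ) : ℝ≥0∞ :=
  if q = ∞ then 1 else q / (q - d)

/-- `𝒟_k`: the (finite) set of `k`-tuples `(d_1, …, d_k)` of positive integers with
`d_1 + ⋯ + d_k ≤ D`. -/
def degreeTuples (D k : ℕ) : Finset (Fin k → ℕ) :=
  (Fintype.piFinset fun _ => Finset.Icc 1 D).filter fun Δ => ∑ l, Δ l ≤ D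

/-- The multiplicative polynomial of degree at most `D` determined by the sequences
`a d = (a d j)_j`, `d ∈ {1, …, D}`:
`P(x) = ∑_{k=1}^D ∑_{(d_1,…,d_k) ∈ 𝒟_k} (a_{d_1}, x^{d_1}) ⋯ (a_{d_k}, x^{d_k})`
where `(a_d, x^d) = ∑' j, a d j * x j ^ d`. -/
noncomputable def mulPoly {𝕜 : Type*} [RCLike 𝕜] (D : ℕ) (a : ℕ → ℕ → 𝕜) (x : ℕ → 𝕜) : 𝕜 :=
  ∑ k ∈ Finset.Icc 1 D, ∑ Δ ∈ degreeTuples D k,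
    ∏ l : Fin k, ∑' j : ℕ, a (Δ l) j * x j ^ (Δ l)

open Filter Topology

section Aux

variable {𝕜 : Type*} [RCLike 𝕜]

/-- Uniform tail-smallness (plus summability) of `∑ ‖a j‖ ‖w j‖ ^ d` over the ball of
radius `M` in `ℓ^q`, for `a ∈ ℓ^{q/(q-d)}`. -/
lemma aux_tail {q : ℝ≥0∞} {d : ℕ} (hd : 0 < d) (hdq : (d : ℝ≥0∞) < q)
    (a : ℕ → 𝕜) (ha : Memℓp a (holderExponent q d)) {M : ℝ} (hM : 0 < M)
    {ε : ℝ} (hε : 0 < ε) :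
    ∃ N : ℕ, ∀ w : lp (fun _ : ℕ => 𝕜) q, ‖w‖ ≤ M →
      (Summable fun j => ‖a j‖ * ‖w j‖ ^ d) ∧
      ∑' j, ‖a (j + N)‖ * ‖w (j + N)‖ ^ d ≤ ε := by
  have hq0 : q ≠ 0 := ((zero_le).trans_lt hdq).ne'
  by_cases hqt : q = ∞
  · -- `q = ∞` : here `a ∈ ℓ¹` and `‖w j‖ ≤ M` pointwise.
    subst hqt
    have hsa : Summable fun j => ‖a j‖ := by
      rw [holderExponent, if_pos rfl] at ha
      have h1 : (0 : ℝ) < (1 : ℝ≥0∞).toReal := by norm_num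
      simpa using ha.summable h1
    have htend : Tendsto (fun N => ∑' j, ‖a (j + N)‖) atTop (𝓝 0) :=
      tendsto_sum_nat_add (fun j => ‖a j‖)
    obtain ⟨N, hN⟩ :=
      (htend.eventually (gt_mem_nhds (show (0:ℝ) < ε / M ^ d by positivity))).exists
    refine ⟨N, fun w hw => ?_⟩
    have hwb : ∀ j, ‖w j‖ ≤ M := fun j =>
      (lp.norm_apply_le_norm ENNReal.top_ne_zero w j).trans hw
    have hb : ∀ j, ‖a j‖ * ‖w j‖ ^ d ≤ ‖a j‖ * M ^ d := fun j =>
      mul_le_mul_of_nonneg_left (pow_le_pow_left₀ (norm_nonneg _) (hwb j) d) (norm_nonneg _)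
    have hnn : ∀ j, 0 ≤ ‖a j‖ * ‖w j‖ ^ d := fun j => by positivity
    have hsaN : Summable fun j => ‖a (j + N)‖ :=
      (summable_nat_add_iff (f := fun j => ‖a j‖) N).2 hsa
    constructor
    · exact Summable.of_nonneg_of_le hnn hb (hsa.mul_right _)
    · calc ∑' j, ‖a (j + N)‖ * ‖w (j + N)‖ ^ d
          ≤ ∑' j, ‖a (j + N)‖ * M ^ d :=
            Summable.tsum_le_tsum (fun j => hb _)
              (Summable.of_nonneg_of_le (fun j => hnn _) (fun j => hb _) (hsaN.mul_right _))
              (hsaN.mul_right _)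
        _ = (∑' j, ‖a (j + N)‖) * M ^ d := tsum_mul_right
        _ ≤ (ε / M ^ d) * M ^ d :=
            mul_le_mul_of_nonneg_right hN.le (by positivity)
        _ = ε := div_mul_cancel₀ _ (by positivity)
  · -- `q < ∞` : Young's inequality with conjugate exponents `q/(q-d)` and `q/d`.
    have hqr : 0 < q.toReal := ENNReal.toReal_pos hq0 hqt
    set qr := q.toReal with hqrdef
    have hdqr : (d : ℝ) < qr := by
      have := (ENNReal.toReal_lt_toReal (ENNReal.natCast_ne_top d) hqt).2 hdq
      simpa using this
    have hd' : (0 : ℝ) < d := by exact_mod_cast hd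
    set r := qr / (qr - d) with hr
    set s := qr / d with hs
    have hrs : Real.HolderConjugate r s := by
      rw [Real.holderConjugate_iff]
      constructor
      · rw [hr, lt_div_iff₀ (by linarith)]; linarith
      · rw [hr, hs, inv_div, inv_div, ← add_div]
        rw [show qr - (d : ℝ) + d = qr by ring, div_self hqr.ne']
    have hr_pos : 0 < r := hrs.pos
    have hs_pos : 0 < s := hrs.symm.pos
    have hexp : (holderExponent q d).toReal = r := by
      rw [holderExponent, if_neg hqt, ENNReal.toReal_div,
          ENNReal.toReal_sub_of_le hdq.le hqt]
      simp [hr, hqrdef]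
    have hA : Summable fun j => ‖a j‖ ^ r := by
      have h0 : 0 < (holderExponent q d).toReal := by rw [hexp]; exact hr_pos
      have := ha.summable h0
      rwa [hexp] at this
    have hBsum : ∀ w : lp (fun _ : ℕ => 𝕜) q, Summable fun j => ‖w j‖ ^ qr :=
      fun w => (lp.memℓp w).summable hqr
    -- pointwise Young inequality with a scaling parameter
    have key : ∀ lam : ℝ, 0 < lam → ∀ (w : lp (fun _ : ℕ => 𝕜) q) (j : ℕ),
        ‖a j‖ * ‖w j‖ ^ d ≤ lam ^ r / r * ‖a j‖ ^ r + 1 / (lam ^ s * s) * ‖w j‖ ^ qr := by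
      intro lam hlam w j
      have h0 : ‖a j‖ * ‖w j‖ ^ d = (lam * ‖a j‖) * (‖w j‖ ^ d / lam) := by
        field_simp
      have hy := Real.young_inequality_of_nonneg
        (mul_nonneg hlam.le (norm_nonneg (a j)))
        (div_nonneg (pow_nonneg (norm_nonneg (w j)) d) hlam.le) hrs
      rw [h0]
      refine hy.trans_eq ?_
      rw [Real.mul_rpow hlam.le (norm_nonneg _),
          Real.div_rpow (pow_nonneg (norm_nonneg _) _) hlam.le,
          ← Real.rpow_natCast ‖w j‖ d, ← Real.rpow_mul (norm_nonneg _)]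
      have hds : (d : ℝ) * s = qr := by rw [hs]; field_simp
      rw [hds]
      ring
    have hsumm : ∀ w : lp (fun _ : ℕ => 𝕜) q, Summable fun j => ‖a j‖ * ‖w j‖ ^ d := by
      intro w
      exact Summable.of_nonneg_of_le (fun j => by positivity) (key 1 one_pos w)
        ((hA.mul_left _).add ((hBsum w).mul_left _))
    -- choose the scaling parameter
    set C := M ^ qr with hC
    have hCpos : 0 < C := Real.rpow_pos_of_pos hM _
    set X := max 1 (2 * C / (s * ε)) with hX
    have hX1 : (1 : ℝ) ≤ X := le_max_left _ _
    have hX0 : (0 : ℝ) ≤ X := by linarith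
    set lam := X ^ (1 / s) with hlam
    have hlam_pos : 0 < lam := Real.rpow_pos_of_pos (by linarith) _
    have hlams : lam ^ s = X := by
      rw [hlam, ← Real.rpow_mul hX0, one_div, inv_mul_cancel₀ hs_pos.ne', Real.rpow_one]
    have htail2 : C / (lam ^ s * s) ≤ ε / 2 := by
      rw [hlams, div_le_iff₀ (by positivity)]
      have h2 : 2 * C / (s * ε) ≤ X := le_max_right _ _
      rw [div_le_iff₀ (by positivity)] at h2
      nlinarith
    -- choose N
    have htendA : Tendsto (fun N => ∑' j, ‖a (j + N)‖ ^ r) atTop (𝓝 0) :=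
      tendsto_sum_nat_add (fun j => ‖a j‖ ^ r)
    obtain ⟨N, hN⟩ := (htendA.eventually (gt_mem_nhds
      (show (0:ℝ) < ε / 2 * r / lam ^ r by positivity))).exists
    refine ⟨N, fun w hw => ⟨hsumm w, ?_⟩⟩
    have hBle : ∑' j, ‖w (j + N)‖ ^ qr ≤ C := by
      have h1 : ∑' j, ‖w j‖ ^ qr ≤ C := by
        rw [← lp.norm_rpow_eq_tsum hqr w]
        exact Real.rpow_le_rpow (lp.norm_nonneg' _) hw hqr.le
      have h2 := Summable.sum_add_tsum_nat_add (f := fun j => ‖w j‖ ^ qr) N (hBsum w)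
      have h3 : 0 ≤ ∑ j ∈ Finset.range N, ‖w j‖ ^ qr :=
        Finset.sum_nonneg fun j _ => Real.rpow_nonneg (norm_nonneg _) _
      simp only at h2
      linarith
    have hAsumN : Summable fun j => ‖a (j + N)‖ ^ r :=
      (summable_nat_add_iff (f := fun j => ‖a j‖ ^ r) N).2 hA
    have hBsumN : Summable fun j => ‖w (j + N)‖ ^ qr :=
      (summable_nat_add_iff (f := fun j => ‖w j‖ ^ qr) N).2 (hBsum w)
    have hlr : (0:ℝ) < lam ^ r := Real.rpow_pos_of_pos hlam_pos _
    calc ∑' j, ‖a (j + N)‖ * ‖w (j + N)‖ ^ d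
        ≤ ∑' j, (lam ^ r / r * ‖a (j + N)‖ ^ r + 1 / (lam ^ s * s) * ‖w (j + N)‖ ^ qr) :=
          Summable.tsum_le_tsum (fun j => key lam hlam_pos w _)
            ((summable_nat_add_iff (f := fun j => ‖a j‖ * ‖w j‖ ^ d) N).2 (hsumm w))
            ((hAsumN.mul_left _).add (hBsumN.mul_left _))
      _ = lam ^ r / r * ∑' j, ‖a (j + N)‖ ^ r
          + 1 / (lam ^ s * s) * ∑' j, ‖w (j + N)‖ ^ qr := by
          rw [Summable.tsum_add (hAsumN.mul_left _) (hBsumN.mul_left _), tsum_mul_left, tsum_mul_left]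
      _ ≤ lam ^ r / r * (ε / 2 * r / lam ^ r) + 1 / (lam ^ s * s) * C :=
          add_le_add (mul_le_mul_of_nonneg_left hN.le (by positivity))
            (mul_le_mul_of_nonneg_left hBle (by positivity))
      _ ≤ ε / 2 + ε / 2 := by
          have e1 : lam ^ r / r * (ε / 2 * r / lam ^ r) = ε / 2 := by
            field_simp
          have e2 : 1 / (lam ^ s * s) * C = C / (lam ^ s * s) := by ring
          rw [e1, e2]
          linarith
      _ = ε := by ring

/-- Passing to the limit in an infinite sum, given coordinatewise convergence and a
uniform tail bound. -/
lemma aux_tendsto_tsum {α : Type*} {L : Filter α} (f : α → ℕ → 𝕜) (g : ℕ → 𝕜)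
    (hf : ∀ x, Summable fun j => ‖f x j‖) (hg : Summable fun j => ‖g j‖)
    (hcoord : ∀ j, Tendsto (fun x => f x j) L (𝓝 (g j)))
    (htail : ∀ ε : ℝ, 0 < ε →
      ∃ N, (∀ x, ∑' j, ‖f x (j + N)‖ ≤ ε) ∧ ∑' j, ‖g (j + N)‖ ≤ ε) :
    Tendsto (fun x => ∑' j, f x j) L (𝓝 (∑' j, g j)) := by
  rw [Metric.tendsto_nhds]
  intro ε hε
  obtain ⟨N, hN1, hN2⟩ := htail (ε / 4) (by positivity)
  have hfin : Tendsto (fun x => ‖∑ j ∈ Finset.range N, (f x j - g j)‖) L (𝓝 0) := by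
    have h1 : Tendsto (fun x => ∑ j ∈ Finset.range N, (f x j - g j)) L
        (𝓝 (∑ j ∈ Finset.range N, (g j - g j))) :=
      tendsto_finset_sum _ fun j _ => (hcoord j).sub tendsto_const_nhds
    simpa using h1.norm
  filter_upwards [hfin.eventually (gt_mem_nhds (show (0:ℝ) < ε / 4 by positivity))] with x hx
  have hsf : Summable (f x) := (hf x).of_norm
  have hsg : Summable g := hg.of_norm
  have d1 := Summable.sum_add_tsum_nat_add (f := f x) N hsf
  have d2 := Summable.sum_add_tsum_nat_add (f := g) N hsg
  have hkey : (∑' j, f x j) - ∑' j, g j =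
      (∑ j ∈ Finset.range N, (f x j - g j))
        + ((∑' j, f x (j + N)) - ∑' j, g (j + N)) := by
    rw [← d1, ← d2, Finset.sum_sub_distrib]
    ring
  rw [dist_eq_norm, hkey]
  have hs1 : Summable (fun j => ‖f x (j + N)‖) :=
    (summable_nat_add_iff (f := fun j => ‖f x j‖) N).2 (hf x)
  have hs2 : Summable (fun j => ‖g (j + N)‖) :=
    (summable_nat_add_iff (f := fun j => ‖g j‖) N).2 hg
  have hb1 : ‖∑' j, f x (j + N)‖ ≤ ε / 4 := (norm_tsum_le_tsum_norm hs1).trans (hN1 x)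
  have hb2 : ‖∑' j, g (j + N)‖ ≤ ε / 4 := (norm_tsum_le_tsum_norm hs2).trans hN2
  calc ‖(∑ j ∈ Finset.range N, (f x j - g j))
        + ((∑' j, f x (j + N)) - ∑' j, g (j + N))‖
      ≤ ‖∑ j ∈ Finset.range N, (f x j - g j)‖
        + (‖∑' j, f x (j + N)‖ + ‖∑' j, g (j + N)‖) := by
        exact (norm_add_le _ _).trans (add_le_add le_rfl (norm_sub_le _ _))
    _ < ε / 4 + (ε / 4 + ε / 4) :=
        add_lt_add_of_lt_of_le hx (add_le_add hb1 hb2)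
    _ ≤ ε := by linarith

end Aux

/-- "Finitely solvable implies infinitely solvable" for multiplicative polynomial
equations: if every finite subsystem `{P_i(x) = b_i : i ∈ S}` has a solution
`x_S ∈ ℓ^q` with `‖x_S‖_q ≤ M`, then the infinite system `{P_i(x) = b_i : i ∈ I}`
has a solution `x ∈ ℓ^q` with `‖x‖_q ≤ M`. -/
theorem multiplicative_finite_implies_infinite {𝕜 : Type*} [RCLike 𝕜]
    (D : ℕ) (hD : 0 < D) (q : ℝ≥0∞) (hq : (D : ℝ≥0∞) < q)
    (I : Type*) [Infinite I]
    (a : I → ℕ → ℕ → 𝕜)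
    (ha : ∀ i, ∀ d ∈ Finset.Icc 1 D, Memℓp (a i d) (holderExponent q d))
    (b : I → 𝕜) (M : ℝ) (hM : 0 < M)
    (hfin : ∀ S : Finset I, ∃ x : lp (fun _ : ℕ => 𝕜) q,
      ‖x‖ ≤ M ∧ ∀ i ∈ S, mulPoly D (a i) (fun j => x j) = b i) :
    ∃ x : lp (fun _ : ℕ => 𝕜) q,
      ‖x‖ ≤ M ∧ ∀ i : I, mulPoly D (a i) (fun j => x j) = b i := by
  classical
  have hq0 : q ≠ 0 := ((zero_le).trans_lt hq).ne'
  choose xS hxS1 hxS2 using hfin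
  -- an ultrafilter refining the order filter on finite subsets of `I`
  let U : Ultrafilter (Finset I) := Ultrafilter.of atTop
  have hU : (U : Filter (Finset I)) ≤ atTop := Ultrafilter.of_le _
  -- coordinatewise limits along the ultrafilter
  have hcb : ∀ (S : Finset I) (j : ℕ), xS S j ∈ Metric.closedBall (0 : 𝕜) M := by
    intro S j
    rw [Metric.mem_closedBall, dist_zero_right]
    exact (lp.norm_apply_le_norm hq0 (xS S) j).trans (hxS1 S)
  have hlim : ∀ j : ℕ, ∃ c ∈ Metric.closedBall (0 : 𝕜) M,
      Tendsto (fun S => xS S j) U (𝓝 c) := by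
    intro j
    obtain ⟨c, hc, hle⟩ := (isCompact_closedBall (0 : 𝕜) M).ultrafilter_le_nhds
      (U.map fun S => xS S j)
      (by
        rw [Ultrafilter.coe_map, le_principal_iff, Filter.mem_map]
        exact Filter.Eventually.of_forall fun S => hcb S j)
    refine ⟨c, hc, ?_⟩
    rwa [Ultrafilter.coe_map] at hle
  choose y hyb hylim using hlim
  have hyM : ∀ j, ‖y j‖ ≤ M := by
    intro j
    have := hyb j
    rwa [Metric.mem_closedBall, dist_zero_right] at this
  -- the limit lies in the ball of radius `M` of `ℓ^q`
  have hXex : ∃ Z : lp (fun _ : ℕ => 𝕜) q, ‖Z‖ ≤ M ∧ ∀ j, Z j = y j := by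
    by_cases hqt : q = ∞
    · subst hqt
      have hmem : Memℓp y ∞ := memℓp_infty ⟨M, by rintro t ⟨j, rfl⟩; exact hyM j⟩
      exact ⟨⟨y, hmem⟩, lp.norm_le_of_forall_le hM.le fun j => hyM j, fun _ => rfl⟩
    · have hqr : 0 < q.toReal := ENNReal.toReal_pos hq0 hqt
      have hsum : ∀ s : Finset ℕ, ∑ j ∈ s, ‖y j‖ ^ q.toReal ≤ M ^ q.toReal := by
        intro s
        have ht : Tendsto (fun S => ∑ j ∈ s, ‖xS S j‖ ^ q.toReal) U
            (𝓝 (∑ j ∈ s, ‖y j‖ ^ q.toReal)) :=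
          tendsto_finset_sum _ fun j _ => (hylim j).norm.rpow_const (Or.inr hqr.le)
        refine le_of_tendsto ht (Filter.Eventually.of_forall fun S => ?_)
        have h1 : ∑ j ∈ s, ‖xS S j‖ ^ q.toReal ≤ ∑' j, ‖xS S j‖ ^ q.toReal :=
          Summable.sum_le_tsum s (fun j _ => Real.rpow_nonneg (norm_nonneg _) _)
            ((lp.memℓp (xS S)).summable hqr)
        have h2 : ∑' j, ‖xS S j‖ ^ q.toReal = ‖xS S‖ ^ q.toReal :=
          (lp.norm_rpow_eq_tsum hqr (xS S)).symm
        have h3 : ‖xS S‖ ^ q.toReal ≤ M ^ q.toReal :=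
          Real.rpow_le_rpow (lp.norm_nonneg' _) (hxS1 S) hqr.le
        linarith
      have hmem : Memℓp y q := memℓp_gen' hsum
      exact ⟨⟨y, hmem⟩, lp.norm_le_of_forall_sum_le hqr hM.le fun s => hsum s, fun _ => rfl⟩
  obtain ⟨Z, hZM, hZy⟩ := hXex
  -- convergence of each bilinear term along the ultrafilter
  have keyT : ∀ i : I, ∀ d ∈ Finset.Icc 1 D,
      Tendsto (fun S => ∑' j, a i d j * xS S j ^ d) U
        (𝓝 (∑' j, a i d j * y j ^ d)) := by
    intro i d hdIcc
    have hdmem := Finset.mem_Icc.mp hdIcc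
    have hd0 : 0 < d := hdmem.1
    have hdq : (d : ℝ≥0∞) < q := lt_of_le_of_lt (Nat.cast_le.2 hdmem.2) hq
    refine aux_tendsto_tsum (f := fun S j => a i d j * xS S j ^ d)
      (g := fun j => a i d j * y j ^ d) ?_ ?_ ?_ ?_
    · intro S
      obtain ⟨N, h⟩ := aux_tail hd0 hdq (a i d) (ha i d hdIcc) hM one_pos
      have := (h (xS S) (hxS1 S)).1
      simpa [norm_mul, norm_pow] using this
    · obtain ⟨N, h⟩ := aux_tail hd0 hdq (a i d) (ha i d hdIcc) hM one_pos
      have := (h Z hZM).1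
      simp only [hZy] at this
      simpa [norm_mul, norm_pow] using this
    · intro j
      exact ((hylim j).pow d).const_mul _
    · intro ε hε
      obtain ⟨N, h⟩ := aux_tail hd0 hdq (a i d) (ha i d hdIcc) hM hε
      refine ⟨N, fun S => ?_, ?_⟩
      · have := (h (xS S) (hxS1 S)).2
        simpa [norm_mul, norm_pow] using this
      · have := (h Z hZM).2
        simp only [hZy] at this
        simpa [norm_mul, norm_pow] using this
  -- convergence of the polynomials
  have hPT : ∀ i : I, Tendsto (fun S => mulPoly D (a i) fun j => xS S j) U
      (𝓝 (mulPoly D (a i) y)) := by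
    intro i
    unfold mulPoly
    refine tendsto_finset_sum _ fun k _ => ?_
    refine tendsto_finset_sum _ fun Δ hΔ => ?_
    refine tendsto_finset_prod _ fun l _ => ?_
    have hΔl : Δ l ∈ Finset.Icc 1 D := by
      rw [degreeTuples, Finset.mem_filter, Fintype.mem_piFinset] at hΔ
      exact hΔ.1 l
    exact keyT i (Δ l) hΔl
  -- eventual constancy of the polynomials along the ultrafilter
  have hevent : ∀ i : I, ∀ᶠ S in (U : Filter (Finset I)),
      mulPoly D (a i) (fun j => xS S j) = b i := by
    intro i
    apply hU
    filter_upwards [Filter.eventually_ge_atTop ({i} : Finset I)] with S hS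
    exact hxS2 S i (Finset.singleton_subset_iff.mp hS)
  refine ⟨Z, hZM, fun i => ?_⟩
  have h1 : Tendsto (fun S => mulPoly D (a i) fun j => xS S j) U (𝓝 (b i)) := by
    refine Tendsto.congr' ?_ tendsto_const_nhds
    filter_upwards [hevent i] with S hS
    exact hS.symm
  have hyZ : (fun j => Z j) = y := funext hZy
  rw [hyZ]
  exact tendsto_nhds_unique (hPT i) h1
end

section
/- Let D be a positive integer, let D < q ≤ ∞, and let I be an infinite set. For each i ∈ I and d ∈ {1,…,D} let a_{i,d} = (a_{i,d,j})_{j=1}^∞ ∈ ℓ^{q/(q−d)}, and let P_i(x) = ∑_{k=1}^D ∑_{(d_1,…,d_k) ∈ D_k} (a_{i,d_1}, x^{d_1})(a_{i,d_2}, x^{d_2})⋯(a_{i,d_k}, x^{d_k}) be the associated multiplicative polynomial, where (a_{i,d}, x^d) = ∑_{j=1}^∞ a_{i,d,j} x_j^d. Let M > 0 and let (b_i)_{i∈I} be scalars. If for every ε > 0 and every finite subset S of I the finite set of polynomial inequalities {|P_i(x) − b_i| ≤ ε : i ∈ S} has a solution x_{S,ε} ∈ ℓ^q with ‖x_{S,ε}‖_q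 ≤ M, then the infinite set of polynomial equations {P_i(x) = b_i : i ∈ I} has an exact solution x ∈ ℓ^q with ‖x‖_q ≤ M. -/
open scoped ENNReal

open Filter Topology

section Aux

variable {𝕜 : Type*} [RCLike 𝕜]

/-- The candidate set: pointwise bounds plus bounded `q`-partial sums. -/
def setK (𝕜 : Type*) [RCLike 𝕜] (q : ℝ≥0∞) (M : ℝ) : Set (ℕ → 𝕜) :=
  {x | (∀ j, ‖x j‖ ≤ M) ∧
    (q ≠ ∞ → ∀ s : Finset ℕ, ∑ j ∈ s, ‖x j‖ ^ q.toReal ≤ M ^ q.toReal)}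

lemma isClosed_setK (q : ℝ≥0∞) (M : ℝ) : IsClosed (setK 𝕜 q M) := by
  have h : setK 𝕜 q M =
      (⋂ j : ℕ, {x : ℕ → 𝕜 | ‖x j‖ ≤ M}) ∩
      (⋂ (_ : q ≠ ∞), ⋂ s : Finset ℕ,
        {x : ℕ → 𝕜 | ∑ j ∈ s, ‖x j‖ ^ q.toReal ≤ M ^ q.toReal}) := by
    ext x
    simp [setK, Set.mem_iInter]
  rw [h]
  refine IsClosed.inter
    (isClosed_iInter fun j => isClosed_le ((continuous_apply j).norm) continuous_const)
    (isClosed_iInter fun _ => isClosed_iInter fun s => isClosed_le ?_ continuous_const)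
  exact continuous_finset_sum s fun j _ =>
    ((continuous_apply j).norm).rpow_const fun x => Or.inr ENNReal.toReal_nonneg

lemma isCompact_setK (q : ℝ≥0∞) (M : ℝ) : IsCompact (setK 𝕜 q M) := by
  refine IsCompact.of_isClosed_subset
    (isCompact_univ_pi fun _ : ℕ => isCompact_closedBall (0 : 𝕜) M)
    (isClosed_setK q M) ?_
  intro x hx
  rw [Set.mem_univ_pi]
  intro j
  simpa [Metric.mem_closedBall, dist_zero_right] using hx.1 j

lemma lp_coe_mem_setK {q : ℝ≥0∞} (hq0 : q ≠ 0) {M : ℝ}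
    (y : lp (fun _ : ℕ => 𝕜) q) (hy : ‖y‖ ≤ M) :
    (fun j => y j) ∈ setK 𝕜 q M := by
  refine ⟨fun j => (lp.norm_apply_le_norm hq0 y j).trans hy, fun hq' s => ?_⟩
  have hr : 0 < q.toReal := ENNReal.toReal_pos hq0 hq'
  exact (lp.sum_rpow_le_norm_rpow hr y s).trans
    (Real.rpow_le_rpow (lp.norm_nonneg' y) hy hr.le)

lemma memℓp_of_mem_setK {q : ℝ≥0∞} {M : ℝ} {x : ℕ → 𝕜} (hx : x ∈ setK 𝕜 q M) :
    Memℓp x q := by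
  rcases eq_or_ne q ∞ with rfl | hq'
  · exact memℓp_infty ⟨M, by rintro - ⟨j, rfl⟩; exact hx.1 j⟩
  · exact memℓp_gen' (hx.2 hq')

lemma norm_le_of_mem_setK {q : ℝ≥0∞} (hq0 : q ≠ 0) {M : ℝ} (hM : 0 ≤ M) {x : ℕ → 𝕜}
    (hx : x ∈ setK 𝕜 q M) (h : Memℓp x q) :
    ‖(⟨x, h⟩ : lp (fun _ : ℕ => 𝕜) q)‖ ≤ M := by
  rcases eq_or_ne q ∞ with rfl | hq'
  · exact lp.norm_le_of_forall_le hM fun j => hx.1 j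
  · exact lp.norm_le_of_forall_sum_le (ENNReal.toReal_pos hq0 hq') hM fun s => hx.2 hq' s

set_option maxHeartbeats 1000000 in
lemma tail_bound {q : ℝ≥0∞} {d : ℕ} (hd : 1 ≤ d) (hdq : (d : ℝ≥0∞) < q)
    {a : ℕ → 𝕜} (ha : Memℓp a (holderExponent q d)) {M : ℝ} (hM : 0 ≤ M) :
    ∃ t : ℕ → ℝ, Tendsto t atTop (𝓝 0) ∧
      ∀ x : ℕ → 𝕜, x ∈ setK 𝕜 q M →
        (Summable fun j => ‖a j‖ * ‖x j‖ ^ d) ∧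
        ∀ N : ℕ, ∑' j, ‖a (j + N)‖ * ‖x (j + N)‖ ^ d ≤ t N := by
  rcases eq_or_ne q ∞ with rfl | hq'
  · -- q = ∞ : here `a ∈ ℓ¹`.
    simp only [holderExponent, if_pos rfl] at ha
    have hs : Summable fun j => ‖a j‖ := by
      have := ha.summable (p := 1) (by norm_num)
      simpa using this
    refine ⟨fun N => (∑' j, ‖a (j + N)‖) * M ^ d, ?_, ?_⟩
    · simpa using (tendsto_sum_nat_add fun j => ‖a j‖).mul_const (M ^ d)
    · intro x hx
      have hle : ∀ j, ‖a j‖ * ‖x j‖ ^ d ≤ ‖a j‖ * M ^ d := fun j =>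
        mul_le_mul_of_nonneg_left (pow_le_pow_left₀ (norm_nonneg _) (hx.1 j) d) (norm_nonneg _)
      have hsum : Summable fun j => ‖a j‖ * ‖x j‖ ^ d :=
        Summable.of_nonneg_of_le (fun j => by positivity) hle (hs.mul_right _)
      refine ⟨hsum, fun N => ?_⟩
      calc ∑' j, ‖a (j + N)‖ * ‖x (j + N)‖ ^ d
          ≤ ∑' j, ‖a (j + N)‖ * M ^ d :=
            Summable.tsum_le_tsum (fun j => hle _) ((summable_nat_add_iff N).2 hsum)
              (((summable_nat_add_iff N).2 hs).mul_right _)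
        _ = (∑' j, ‖a (j + N)‖) * M ^ d := tsum_mul_right
  · -- q < ∞
    set r := q.toReal with hrdef
    clear_value r
    have hrd : (d : ℝ) < r := by
      have := (ENNReal.toReal_lt_toReal (by simp) hq').2 hdq
      simpa [hrdef] using this
    have hd0 : (0 : ℝ) < d := by exact_mod_cast hd
    have hr0 : (0 : ℝ) < r := lt_trans hd0 hrd
    set p := r / (r - d) with hpdef
    clear_value p
    have hrd0 : (0 : ℝ) < r - d := by linarith
    have hp1 : 1 < p := by rw [hpdef]; exact (one_lt_div hrd0).2 (by linarith)
    have hp0 : 0 < p := lt_trans one_pos hp1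
    have hpq : p.HolderConjugate (r / d) := by
      refine ⟨?_, hp0, div_pos hr0 hd0⟩
      rw [inv_one, hpdef, inv_div, inv_div, ← add_div, sub_add_cancel, div_self hr0.ne']
    have hhp : (holderExponent q d).toReal = p := by
      rw [holderExponent, if_neg hq', ENNReal.toReal_div,
        ENNReal.toReal_sub_of_le hdq.le hq', ENNReal.toReal_natCast, ← hrdef, hpdef]
    have hsa : Summable fun j => ‖a j‖ ^ p := by
      have := ha.summable (by rw [hhp]; exact hp0)
      rwa [hhp] at this
    have hpow : ∀ (y : ℝ), 0 ≤ y → (y ^ (d : ℝ)) ^ (r / d) = y ^ r := by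
      intro y hy
      rw [← Real.rpow_mul hy, mul_comm, div_mul_cancel₀ _ (ne_of_gt hd0)]
    refine ⟨fun N => (∑' j, ‖a (j + N)‖ ^ p) ^ (1 / p) * M ^ d, ?_, ?_⟩
    · have h0 : Tendsto (fun N => ∑' j, ‖a (j + N)‖ ^ p) atTop (𝓝 0) :=
        tendsto_sum_nat_add fun j => ‖a j‖ ^ p
      have h1 := (h0.rpow_const (Or.inr (by positivity : (0:ℝ) ≤ 1 / p))).mul_const (M ^ d)
      rwa [Real.zero_rpow (one_div_pos.2 hp0).ne', zero_mul] at h1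
    · intro x hx
      have hsx : Summable fun j => ‖x j‖ ^ r := by
        refine summable_of_sum_le (c := M ^ r) (fun j => Real.rpow_nonneg (norm_nonneg _) _) ?_
        intro u; rw [hrdef]; exact hx.2 hq' u
      have key : ∀ N : ℕ, (Summable fun j => ‖a (j + N)‖ * ‖x (j + N)‖ ^ d) ∧
          ∑' j, ‖a (j + N)‖ * ‖x (j + N)‖ ^ d
            ≤ (∑' j, ‖a (j + N)‖ ^ p) ^ (1 / p) * M ^ d := by
        intro N
        have hgs : Summable fun j => (‖x (j + N)‖ ^ (d : ℝ)) ^ (r / d) := by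
          have heq : (fun j : ℕ => (‖x (j + N)‖ ^ (d : ℝ)) ^ (r / d))
              = fun j : ℕ => ‖x (j + N)‖ ^ r := by
            funext j; exact hpow _ (norm_nonneg _)
          rw [heq]
          exact (summable_nat_add_iff N).2 hsx
        have hfs : Summable fun j => ‖a (j + N)‖ ^ p := (summable_nat_add_iff N).2 hsa
        obtain ⟨hs, hle⟩ := Real.summable_and_inner_le_Lp_mul_Lq_tsum_of_nonneg hpq
          (f := fun j => ‖a (j + N)‖) (g := fun j => ‖x (j + N)‖ ^ (d : ℝ))
          (fun j => norm_nonneg _) (fun j => Real.rpow_nonneg (norm_nonneg _) _) hfs hgs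
        have hrw : (fun j : ℕ => ‖a (j + N)‖ * ‖x (j + N)‖ ^ (d : ℝ))
            = fun j : ℕ => ‖a (j + N)‖ * ‖x (j + N)‖ ^ d := by
          funext j; rw [Real.rpow_natCast]
        constructor
        · exact hrw ▸ hs
        · have hA : ∑' j, (‖x (j + N)‖ ^ (d : ℝ)) ^ (r / d) ≤ M ^ r := by
            have heq : (fun j : ℕ => (‖x (j + N)‖ ^ (d : ℝ)) ^ (r / d))
                = fun j : ℕ => ‖x (j + N)‖ ^ r := by
              funext j; exact hpow _ (norm_nonneg _)
            rw [heq]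
            have hfull : ∑' j, ‖x j‖ ^ r ≤ M ^ r := by
              refine Summable.tsum_le_of_sum_le hsx ?_
              rw [hrdef]; exact hx.2 hq'
            have hsplit := Summable.sum_add_tsum_nat_add N hsx
            have hnn : 0 ≤ ∑ j ∈ Finset.range N, ‖x j‖ ^ r :=
              Finset.sum_nonneg fun j _ => Real.rpow_nonneg (norm_nonneg _) _
            linarith
          have hMr : (M ^ r) ^ (1 / (r / d)) = M ^ d := by
            rw [one_div_div, ← Real.rpow_natCast M d, ← Real.rpow_mul hM]
            congr 1
            rw [mul_comm, div_mul_cancel₀ _ hr0.ne']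
          have h2 : (∑' j, (‖x (j + N)‖ ^ (d : ℝ)) ^ (r / d)) ^ (1 / (r / d)) ≤ M ^ d := by
            have := Real.rpow_le_rpow
              (tsum_nonneg fun j => Real.rpow_nonneg (Real.rpow_nonneg (norm_nonneg _) _) _)
              hA (by positivity : (0:ℝ) ≤ 1 / (r / d))
            rwa [hMr] at this
          calc ∑' j, ‖a (j + N)‖ * ‖x (j + N)‖ ^ d
              = ∑' j, ‖a (j + N)‖ * ‖x (j + N)‖ ^ (d : ℝ) := by rw [hrw]
            _ ≤ (∑' j, ‖a (j + N)‖ ^ p) ^ (1 / p)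
                * (∑' j, (‖x (j + N)‖ ^ (d : ℝ)) ^ (r / d)) ^ (1 / (r / d)) := hle
            _ ≤ (∑' j, ‖a (j + N)‖ ^ p) ^ (1 / p) * M ^ d := by
                exact mul_le_mul_of_nonneg_left h2
                  (Real.rpow_nonneg (tsum_nonneg fun j =>
                    Real.rpow_nonneg (norm_nonneg _) _) _)
      refine ⟨?_, fun N => (key N).2⟩
      simpa using (key 0).1

lemma pairing_continuousOn {q : ℝ≥0∞} {d : ℕ} (hd : 1 ≤ d) (hdq : (d : ℝ≥0∞) < q)
    {a : ℕ → 𝕜} (ha : Memℓp a (holderExponent q d)) {M : ℝ} (hM : 0 ≤ M) :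
    ContinuousOn (fun x : ℕ → 𝕜 => ∑' j, a j * x j ^ d) (setK 𝕜 q M) := by
  obtain ⟨t, ht, hbd⟩ := tail_bound hd hdq ha hM
  have htu : TendstoUniformlyOn
      (fun (N : ℕ) (x : ℕ → 𝕜) => ∑ j ∈ Finset.range N, a j * x j ^ d)
      (fun x : ℕ → 𝕜 => ∑' j, a j * x j ^ d) atTop (setK 𝕜 q M) := by
    rw [Metric.tendstoUniformlyOn_iff]
    intro ε hε
    filter_upwards [ht.eventually_lt_const hε] with N hN x hx
    obtain ⟨hsum, htail⟩ := hbd x hx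
    have hsum' : Summable fun j => a j * x j ^ d := by
      refine Summable.of_norm ?_
      simpa [norm_mul, norm_pow] using hsum
    have hsplit := Summable.sum_add_tsum_nat_add N hsum'
    rw [dist_eq_norm]
    have hdiff : (∑' j, a j * x j ^ d) - ∑ j ∈ Finset.range N, a j * x j ^ d
        = ∑' j, a (j + N) * x (j + N) ^ d := by
      rw [← hsplit]; ring
    rw [hdiff]
    have hns : Summable fun j => ‖a (j + N) * x (j + N) ^ d‖ := by
      have := (summable_nat_add_iff N).2 hsum
      simpa [norm_mul, norm_pow] using this
    calc ‖∑' j, a (j + N) * x (j + N) ^ d‖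
        ≤ ∑' j, ‖a (j + N) * x (j + N) ^ d‖ := norm_tsum_le_tsum_norm hns
      _ = ∑' j, ‖a (j + N)‖ * ‖x (j + N)‖ ^ d := by simp [norm_mul, norm_pow]
      _ ≤ t N := htail N
      _ < ε := hN
  exact htu.continuousOn (Filter.Eventually.of_forall fun N =>
    (continuous_finset_sum _ fun j _ =>
      continuous_const.mul ((continuous_apply j).pow d)).continuousOn).frequently

lemma mulPoly_continuousOn {D : ℕ} {q : ℝ≥0∞} (hq : (D : ℝ≥0∞) < q) {a : ℕ → ℕ → 𝕜}
    (ha : ∀ d ∈ Finset.Icc 1 D, Memℓp (a d) (holderExponent q d)) {M : ℝ} (hM : 0 ≤ M) :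
    ContinuousOn (fun x => mulPoly D a x) (setK 𝕜 q M) := by
  unfold mulPoly
  refine continuousOn_finset_sum _ fun k hk => continuousOn_finset_sum _ fun Δ hΔ =>
    continuousOn_finset_prod _ fun l _ => ?_
  have hΔl : Δ l ∈ Finset.Icc 1 D := by
    rw [degreeTuples, Finset.mem_filter] at hΔ
    exact Fintype.mem_piFinset.1 hΔ.1 l
  have h1 : 1 ≤ Δ l := (Finset.mem_Icc.1 hΔl).1
  have h2 : ((Δ l : ℕ) : ℝ≥0∞) < q :=
    lt_of_le_of_lt (by exact_mod_cast Nat.cast_le.2 (Finset.mem_Icc.1 hΔl).2) hq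
  exact pairing_continuousOn h1 h2 (ha _ hΔl) hM

end Aux

/-- **Main theorem.** If for every `ε > 0` and every finite `S ⊆ I` the polynomial
inequalities `{‖P_i(x) - b_i‖ ≤ ε : i ∈ S}` have a solution `x ∈ ℓ^q` with
`‖x‖_q ≤ M`, then the infinite system of multiplicative polynomial equations
`{P_i(x) = b_i : i ∈ I}` has an exact solution `x ∈ ℓ^q` with `‖x‖_q ≤ M`. -/
theorem multiplicative_approx_implies_exact {𝕜 : Type*} [RCLike 𝕜]
    (D : ℕ) (hD : 0 < D) (q : ℝ≥0∞) (hq : (D : ℝ≥0∞) < q)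
    (I : Type*) [Infinite I]
    (a : I → ℕ → ℕ → 𝕜)
    (ha : ∀ i, ∀ d ∈ Finset.Icc 1 D, Memℓp (a i d) (holderExponent q d))
    (b : I → 𝕜) (M : ℝ) (hM : 0 < M)
    (hfin : ∀ (ε : ℝ), 0 < ε → ∀ S : Finset I,
      ∃ x : lp (fun _ : ℕ => 𝕜) q,
        ‖x‖ ≤ M ∧ ∀ i ∈ S, ‖mulPoly D (a i) (fun j => x j) - b i‖ ≤ ε) :
    ∃ x : lp (fun _ : ℕ => 𝕜) q,
      ‖x‖ ≤ M ∧ ∀ i : I, mulPoly D (a i) (fun j => x j) = b i := by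
  classical
  have hq0 : q ≠ 0 :=
    (lt_of_lt_of_le (by exact_mod_cast hD : (0 : ℝ≥0∞) < (D : ℝ≥0∞)) hq.le).ne'
  set C : I × ℕ → Set (ℕ → 𝕜) := fun p =>
    setK 𝕜 q M ∩ {x | ‖mulPoly D (a p.1) x - b p.1‖ ≤ 1 / (p.2 + 1)} with hC
  have hCc : ∀ p, IsClosed (C p) := by
    intro p
    have hcont : ContinuousOn (fun x => ‖mulPoly D (a p.1) x - b p.1‖) (setK 𝕜 q M) :=
      ((mulPoly_continuousOn hq (ha p.1) hM.le).sub continuousOn_const).norm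
    exact hcont.preimage_isClosed_of_isClosed (isClosed_setK q M)
      (isClosed_Iic (a := (1 : ℝ) / (p.2 + 1)))
  have hFIP : ∀ u : Finset (I × ℕ), (setK 𝕜 q M ∩ ⋂ p ∈ u, C p).Nonempty := by
    intro u
    set n : ℕ := u.sup Prod.snd with hn
    have hεpos : (0 : ℝ) < 1 / (n + 1) := by positivity
    obtain ⟨y, hy, hyS⟩ := hfin _ hεpos (u.image Prod.fst)
    have hKmem : (fun j => y j) ∈ setK 𝕜 q M := lp_coe_mem_setK hq0 y hy
    refine ⟨fun j => y j, hKmem, Set.mem_iInter₂.2 fun p hp => ⟨hKmem, ?_⟩⟩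
    have hb := hyS p.1 (Finset.mem_image_of_mem Prod.fst hp)
    refine hb.trans ?_
    have hle : p.2 ≤ n := Finset.le_sup (f := Prod.snd) hp
    have h1 : ((p.2 : ℝ) + 1) ≤ (n : ℝ) + 1 := by exact_mod_cast Nat.succ_le_succ hle
    exact one_div_le_one_div_of_le (by positivity) h1
  obtain ⟨xlim, hxK, hxC⟩ := (isCompact_setK q M).inter_iInter_nonempty C hCc hFIP
  have hmem : Memℓp xlim q := memℓp_of_mem_setK hxK
  refine ⟨⟨xlim, hmem⟩, norm_le_of_mem_setK hq0 hM.le hxK hmem, fun i => ?_⟩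
  have hbound : ∀ n : ℕ, ‖mulPoly D (a i) xlim - b i‖ ≤ 1 / (n + 1) := fun n =>
    (Set.mem_iInter.1 hxC (i, n)).2
  have hzero : ‖mulPoly D (a i) xlim - b i‖ = 0 := by
    by_contra h
    have hpos : 0 < ‖mulPoly D (a i) xlim - b i‖ :=
      lt_of_le_of_ne (norm_nonneg _) (Ne.symm h)
    obtain ⟨n, hn⟩ := exists_nat_one_div_lt hpos
    exact absurd (hbound n) (not_le.2 hn)
  exact sub_eq_zero.1 (norm_eq_zero.1 hzero)
end

section
/- Let D be a positive integer, let D < q ≤ ∞, and let I be an infinite set. For each i ∈ I and d ∈ {1,…,D} let a_{i,d} = (a_{i,d,j})_{j=1}^∞ ∈ ℓ^{q/(q−d)}, and let P_i(x) = ∑_{k=1}^D ∑_{(d_1,…,d_k) ∈ D_k} (a_{i,d_1}, x^{d_1})⋯(a_{i,d_k}, x^{d_k}) be the associated multiplicative polynomial, where (a_{i,d}, x^d) = ∑_{j=1}^∞ a_{i,d,j} x_j^d. Let (b_i)_{i∈I} be scalars and let m = (m_j)_{j=1}^∞ ∈ ℓ^q with m_j ≥ 0 for all j. If for every ε > 0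 and every finite subset S of I the finite set of polynomial inequalities {|P_i(x) − b_i| ≤ ε : i ∈ S} has a solution x_{S,ε} = (x_{S,ε,j})_{j=1}^∞ ∈ ℓ^q with |x_{S,ε,j}| ≤ m_j for all j ∈ ℕ, then the infinite set of polynomial equations {P_i(x) = b_i : i ∈ I} has an exact solution x = (x_j)_{j=1}^∞ ∈ ℓ^q with |x_j| ≤ m_j for all j ∈ ℕ. -/
open scoped ENNReal

/-- Refinement of the main theorem with a sequential bound: if `m ∈ ℓ^q` has
nonnegative terms and for every `ε > 0` and finite `S ⊆ I` the inequalities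
`{‖P_i(x) - b_i‖ ≤ ε : i ∈ S}` have a solution `x ∈ ℓ^q` with `‖x j‖ ≤ m j` for all
`j`, then the infinite system `{P_i(x) = b_i : i ∈ I}` has an exact solution
`x ∈ ℓ^q` with `‖x j‖ ≤ m j` for all `j`. -/
theorem multiplicative_approx_implies_exact_seq_bound {𝕜 : Type*} [RCLike 𝕜]
    (D : ℕ) (hD : 0 < D) (q : ℝ≥0∞) (hq : (D : ℝ≥0∞) < q)
    (I : Type*) [Infinite I]
    (a : I → ℕ → ℕ → 𝕜)
    (ha : ∀ i, ∀ d ∈ Finset.Icc 1 D, Memℓp (a i d) (holderExponent q d))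
    (b : I → 𝕜)
    (m : ℕ → ℝ) (hm : Memℓp m q) (hm0 : ∀ j, 0 ≤ m j)
    (hfin : ∀ (ε : ℝ), 0 < ε → ∀ S : Finset I,
      ∃ x : ℕ → 𝕜, Memℓp x q ∧ (∀ j, ‖x j‖ ≤ m j) ∧
        ∀ i ∈ S, ‖mulPoly D (a i) x - b i‖ ≤ ε) :
    ∃ x : ℕ → 𝕜, Memℓp x q ∧ (∀ j, ‖x j‖ ≤ m j) ∧
      ∀ i : I, mulPoly D (a i) x = b i := by
  classical
  -- The compact box `K`
  set K : Set (ℕ → 𝕜) := Set.univ.pi (fun j => Metric.closedBall (0 : 𝕜) (m j)) with hKdef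
  have hKmem : ∀ x : ℕ → 𝕜, x ∈ K ↔ ∀ j, ‖x j‖ ≤ m j := by
    intro x
    simp [hKdef, Set.mem_univ_pi, Metric.mem_closedBall, dist_zero_right]
  have hKcompact : IsCompact K := isCompact_univ_pi fun j => isCompact_closedBall _ _
  have hKclosed : IsClosed K := isClosed_set_pi fun j _ => Metric.isClosed_closedBall
  -- Summability of the dominating series, by Hölder
  have hsum : ∀ i, ∀ d ∈ Finset.Icc 1 D, Summable (fun j => ‖a i d j‖ * m j ^ d) := by
    intro i d hd
    obtain ⟨hd1, hdD⟩ := Finset.mem_Icc.mp hd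
    by_cases hqtop : q = ∞
    · -- case `q = ∞` : `a i d ∈ ℓ¹`, `m` bounded
      have ha1 : Memℓp (a i d) 1 := by
        have := ha i d hd; rwa [holderExponent, if_pos hqtop] at this
      have hsa : Summable fun j => ‖a i d j‖ := by
        have := (memℓp_gen_iff (p := 1) (by norm_num)).mp ha1
        simpa using this
      obtain ⟨M, hM⟩ := memℓp_infty_iff.mp (hqtop ▸ hm)
      have hMle : ∀ j, m j ≤ M := by
        intro j
        have := hM ⟨j, rfl⟩
        simpa [Real.norm_of_nonneg (hm0 j)] using this
      refine Summable.of_nonneg_of_le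
        (fun j => mul_nonneg (norm_nonneg _) (pow_nonneg (hm0 j) d))
        (fun j => mul_le_mul_of_nonneg_left (pow_le_pow_left₀ (hm0 j) (hMle j) d)
          (norm_nonneg _)) (hsa.mul_right (M ^ d))
    · -- case `q < ∞` : genuine Hölder
      have hq' : q ≠ ∞ := hqtop
      set r := q.toReal with hrdef
      have hrD : (D : ℝ) < r := by
        have h := (ENNReal.toReal_lt_toReal (by simp) hq').mpr hq
        simpa using h
      have hdr : (d : ℝ) < r := lt_of_le_of_lt (by exact_mod_cast hdD) hrD
      have hdpos : (0 : ℝ) < d := by exact_mod_cast hd1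
      have hrpos : (0 : ℝ) < r := lt_trans hdpos hdr
      have hpq : Real.HolderConjugate (r / (r - d)) (r / d) := by
        rw [Real.holderConjugate_iff]; constructor
        · rw [lt_div_iff₀ (by linarith)]; linarith
        · rw [inv_div, inv_div]; field_simp; ring
      have hdq : (d : ℝ≥0∞) ≤ q := le_of_lt (lt_of_le_of_lt (by exact_mod_cast hdD) hq)
      have htr : (q / (q - (d : ℝ≥0∞))).toReal = r / (r - d) := by
        rw [ENNReal.toReal_div, ENNReal.toReal_sub_of_le hdq hq']
        simp [hrdef]
      have hf_sum : Summable fun j => ‖a i d j‖ ^ (r / (r - d)) := by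
        have hmem := ha i d hd
        rw [holderExponent, if_neg hqtop] at hmem
        have hppos : 0 < (q / (q - (d : ℝ≥0∞))).toReal := by
          rw [htr]; exact div_pos hrpos (by linarith)
        have := (memℓp_gen_iff hppos).mp hmem
        rwa [htr] at this
      have hg_sum : Summable fun j => (m j ^ d) ^ (r / d) := by
        have hmr : Summable fun j => ‖m j‖ ^ r :=
          (memℓp_gen_iff (by rw [← hrdef]; exact hrpos)).mp hm
        have : ∀ j, (m j ^ d) ^ (r / d) = ‖m j‖ ^ r := by
          intro j
          rw [Real.norm_of_nonneg (hm0 j), ← Real.rpow_natCast (m j) d,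
            ← Real.rpow_mul (hm0 j)]
          congr 1
          field_simp
        simpa [this] using hmr
      exact Real.summable_mul_of_Lp_Lq_of_nonneg hpq (fun j => norm_nonneg _)
        (fun j => pow_nonneg (hm0 j) d) hf_sum hg_sum
  -- Continuity of the basic sums on `K`
  have hTcont : ∀ (c : ℕ → 𝕜) (d : ℕ), Summable (fun j => ‖c j‖ * m j ^ d) →
      ContinuousOn (fun x : ℕ → 𝕜 => ∑' j, c j * x j ^ d) K := by
    intro c d hs
    refine continuousOn_tsum (fun j => Continuous.continuousOn ?_) hs ?_
    · exact continuous_const.mul ((continuous_apply j).pow d)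
    · intro j x hx
      rw [norm_mul, norm_pow]
      exact mul_le_mul_of_nonneg_left
        (pow_le_pow_left₀ (norm_nonneg _) ((hKmem x).mp hx j) d) (norm_nonneg _)
  have hcont : ∀ i, ContinuousOn (fun x => mulPoly D (a i) x) K := by
    intro i
    unfold mulPoly
    refine continuousOn_finset_sum _ fun k hk => ?_
    refine continuousOn_finset_sum _ fun Δ hΔ => ?_
    refine continuousOn_finset_prod _ fun l _ => ?_
    have hΔl : Δ l ∈ Finset.Icc 1 D := by
      rw [degreeTuples, Finset.mem_filter, Fintype.mem_piFinset] at hΔ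
      exact hΔ.1 l
    exact hTcont _ _ (hsum i (Δ l) hΔl)
  -- Membership in `ℓ^q` from domination
  have hmemq : ∀ x : ℕ → 𝕜, (∀ j, ‖x j‖ ≤ m j) → Memℓp x q := by
    intro x hx
    by_cases hqtop : q = ∞
    · subst hqtop
      obtain ⟨M, hM⟩ := memℓp_infty_iff.mp hm
      refine memℓp_infty ⟨M, ?_⟩
      rintro y ⟨j, rfl⟩
      exact le_trans (hx j) (by simpa [Real.norm_of_nonneg (hm0 j)] using hM ⟨j, rfl⟩)
    · have hrpos : 0 < q.toReal := by
        refine ENNReal.toReal_pos (fun h => ?_) hqtop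
        rw [h] at hq; exact (not_lt.mpr zero_le) hq
      rw [memℓp_gen_iff hrpos] at hm ⊢
      refine Summable.of_nonneg_of_le (fun j => Real.rpow_nonneg (norm_nonneg _) _)
        (fun j => ?_) hm
      exact Real.rpow_le_rpow (norm_nonneg _)
        (le_trans (hx j) (le_of_eq (Real.norm_of_nonneg (hm0 j)).symm)) (le_of_lt hrpos)
  -- The directed family of nonempty compact sets
  let A : Finset I × ℕ → Set (ℕ → 𝕜) := fun P =>
    K ∩ ⋂ i ∈ P.1, {x | ‖mulPoly D (a i) x - b i‖ ≤ 1 / (P.2 + 1)}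
  have hAne : ∀ P, (A P).Nonempty := by
    rintro ⟨S, n⟩
    have hε : (0 : ℝ) < 1 / (n + 1) := by positivity
    obtain ⟨x, -, hxm, hxS⟩ := hfin _ hε S
    exact ⟨x, (hKmem x).mpr hxm, Set.mem_iInter₂.mpr fun i hi => hxS i hi⟩
  have hAclosed : ∀ P, IsClosed (A P) := by
    rintro ⟨S, n⟩
    have heq : A (S, n) =
        K ∩ ⋂ i ∈ S,
          (K ∩ (fun x => ‖mulPoly D (a i) x - b i‖) ⁻¹' Set.Iic (1 / ((n : ℝ) + 1))) := by
      ext x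
      simp only [A, Set.mem_inter_iff, Set.mem_iInter, Set.mem_setOf_eq, Set.mem_preimage,
        Set.mem_Iic]
      constructor
      · rintro ⟨h1, h2⟩; exact ⟨h1, fun i hi => ⟨h1, h2 i hi⟩⟩
      · rintro ⟨h1, h2⟩; exact ⟨h1, fun i hi => (h2 i hi).2⟩
    rw [heq]
    refine hKclosed.inter (isClosed_iInter fun i => isClosed_iInter fun hi => ?_)
    exact (((hcont i).sub continuousOn_const).norm).preimage_isClosed_of_isClosed
      hKclosed isClosed_Iic
  have hAcompact : ∀ P, IsCompact (A P) :=
    fun P => hKcompact.of_isClosed_subset (hAclosed P) Set.inter_subset_left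
  have hdir : Directed (· ⊇ ·) A := by
    rintro ⟨S, n⟩ ⟨S', n'⟩
    refine ⟨(S ∪ S', max n n'), ?_, ?_⟩ <;>
    · rintro x ⟨hxK, hxS⟩
      refine ⟨hxK, Set.mem_iInter₂.mpr fun i hi => ?_⟩
      have h1 : ‖mulPoly D (a i) x - b i‖ ≤ 1 / (((max n n' : ℕ) : ℝ) + 1) :=
        Set.mem_iInter₂.mp hxS i (by
          first
            | exact Finset.mem_union_left _ hi
            | exact Finset.mem_union_right _ hi)
      refine le_trans h1 (one_div_le_one_div_of_le (by positivity) ?_)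
      push_cast
      have h2 := le_max_left (n : ℝ) (n' : ℕ)
      have h3 := le_max_right (n : ℝ) (n' : ℕ)
      first
        | linarith
        | linarith
  obtain ⟨x, hx⟩ := IsCompact.nonempty_iInter_of_directed_nonempty_isCompact_isClosed
    A hdir hAne hAcompact hAclosed
  rw [Set.mem_iInter] at hx
  have hxK : x ∈ K := (hx (∅, 0)).1
  have hxm : ∀ j, ‖x j‖ ≤ m j := (hKmem x).mp hxK
  refine ⟨x, hmemq x hxm, hxm, fun i => ?_⟩
  have hall : ∀ n : ℕ, ‖mulPoly D (a i) x - b i‖ ≤ 1 / (n + 1) := by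
    intro n
    have h2 := (hx ({i}, n)).2
    exact Set.mem_iInter₂.mp h2 i (Finset.mem_singleton_self i)
  have hle : ‖mulPoly D (a i) x - b i‖ ≤ 0 := by
    by_contra h
    push_neg at h
    obtain ⟨n, hn⟩ := exists_nat_one_div_lt h
    exact absurd (hall n) (not_le.mpr hn)
  have := le_antisymm hle (norm_nonneg _)
  rwa [norm_eq_zero, sub_eq_zero] at this
end

section
/- Let d be a positive integer, let d < q ≤ ∞, and let p = q/(q−d) (with p = 1 when q = ∞). Let a = (a_j)_{j=1}^∞ ∈ ℓ^p and let M > 0. Then the function f_d defined on X_{q,M} = {x ∈ ℓ^q : ‖x‖_q ≤ M} by f_d(x) = ∑_{j=1}^∞ a_j x_j^d is continuous with respect to the product topology on X_{q,M} as a subspace of Ω. -/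
set_option maxHeartbeats 1000000


open scoped ENNReal

/-- `X_{q,M} = {x ∈ ℓ^q : ‖x‖_q ≤ M}`, regarded as a set of sequences in the product
space `ℕ → 𝕜` (with the product topology, i.e. as a subspace of the product `Ω` of
closed balls of radius `M`). -/
def lpBall (𝕜 : Type*) [RCLike 𝕜] (q : ℝ≥0∞) (M : ℝ) : Set (ℕ → 𝕜) :=
  {x | ∃ y : lp (fun _ : ℕ => 𝕜) q, ‖y‖ ≤ M ∧ ⇑y = x}

/-- Let `d ≥ 1`, `d < q ≤ ∞`, `p = q/(q-d)` (with `p = 1` when `q = ∞`) and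
`a ∈ ℓ^p`.  For `M > 0`, the function `f_d(x) = ∑' j, a j * x j ^ d` is continuous on
`X_{q,M}` with respect to the product topology on `X_{q,M}` as a subspace of `Ω`. -/
theorem continuousOn_lpBall_sum_pow {𝕜 : Type*} [RCLike 𝕜]
    (d : ℕ) (hd : 0 < d) (q : ℝ≥0∞) (hq : (d : ℝ≥0∞) < q)
    (a : ℕ → 𝕜) (ha : Memℓp a (holderExponent q d))
    (M : ℝ) (hM : 0 < M) :
    ContinuousOn (fun x : ℕ → 𝕜 => ∑' j : ℕ, a j * x j ^ d) (lpBall 𝕜 q M) := by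
  set s := lpBall 𝕜 q M with hs
  have key : (∀ x ∈ s, Summable fun j => ‖a j * x j ^ d‖) ∧
      ∃ t : ℕ → ℝ, Filter.Tendsto t Filter.atTop (nhds 0) ∧
        ∀ n, ∀ x ∈ s, ∑' k, ‖a (k + n) * x (k + n) ^ d‖ ≤ t n := by
    rcases eq_or_ne q ∞ with rfl | hq'
    · -- case q = ∞ : p = 1
      have hp : holderExponent ∞ d = 1 := by simp [holderExponent]
      rw [hp] at ha
      have ha1 : Summable fun j => ‖a j‖ := by
        have := ha.summable (by norm_num : (0:ℝ) < (1:ℝ≥0∞).toReal)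
        simpa using this
      have hcoord : ∀ x ∈ s, ∀ j, ‖x j‖ ≤ M := by
        rintro x ⟨y, hy, rfl⟩ j
        exact (lp.norm_apply_le_norm ENNReal.top_ne_zero y j).trans hy
      have hle : ∀ x ∈ s, ∀ j, ‖a j * x j ^ d‖ ≤ ‖a j‖ * M ^ d := by
        intro x hx j
        rw [norm_mul, norm_pow]
        exact mul_le_mul_of_nonneg_left
          (pow_le_pow_left₀ (norm_nonneg _) (hcoord x hx j) d) (norm_nonneg _)
      have hAx : ∀ x ∈ s, Summable fun j => ‖a j * x j ^ d‖ := fun x hx =>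
        Summable.of_nonneg_of_le (fun j => norm_nonneg _) (hle x hx) (ha1.mul_right _)
      refine ⟨hAx, fun n => (∑' k, ‖a (k + n)‖) * M ^ d, ?_, ?_⟩
      · have := (tendsto_sum_nat_add fun j => ‖a j‖).mul_const (M ^ d)
        simpa using this
      · intro n x hx
        exact (Summable.tsum_le_tsum (fun k => hle x hx (k + n))
          ((summable_nat_add_iff (f := fun j => ‖a j * x j ^ d‖) n).mpr (hAx x hx))
          (((summable_nat_add_iff (f := fun j => ‖a j‖) n).mpr ha1).mul_right _)).trans
          (le_of_eq tsum_mul_right)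
    · -- case q < ∞
      set qr := q.toReal with hqr
      have hdq : (d : ℝ) < qr := by
        have := (ENNReal.toReal_lt_toReal (by simp) hq').mpr hq
        simpa using this
      have hd1 : (1 : ℝ) ≤ (d : ℝ) := by exact_mod_cast hd
      have hqr0 : 0 < qr := by linarith
      set pr := qr / (qr - d) with hpr
      have hpexp : (holderExponent q d).toReal = pr := by
        rw [holderExponent, if_neg hq', ENNReal.toReal_div,
          ENNReal.toReal_sub_of_le hq.le hq']
        simp [hpr, hqr]
      have hpr1 : 1 < pr := by
        rw [hpr]
        rw [lt_div_iff₀ (by linarith)]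
        linarith
      have hconj : pr.HolderConjugate (qr / d) := by
        have h1 : qr - (d:ℝ) ≠ 0 := by linarith
        have h3 : (d:ℝ) ≠ 0 := by positivity
        refine Real.holderConjugate_iff.mpr ⟨hpr1, ?_⟩
        rw [hpr]
        field_simp
        ring
      have ha_sum : Summable fun j => ‖a j‖ ^ pr := by
        have := ha.summable (by rw [hpexp]; linarith)
        rwa [hpexp] at this
      -- per-point facts
      have hxsum : ∀ x ∈ s, (Summable fun j => ‖x j‖ ^ qr) ∧
          ∑' j, ‖x j‖ ^ qr ≤ M ^ qr := by
        rintro x ⟨y, hy, rfl⟩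
        have hmem := lp.memℓp y
        have hsum := hmem.summable (by rw [← hqr]; exact hqr0)
        refine ⟨hsum, ?_⟩
        have h1 : ‖y‖ ^ qr = ∑' j, ‖y j‖ ^ qr := lp.norm_rpow_eq_tsum (by rw [← hqr]; exact hqr0) y
        rw [← h1]
        exact Real.rpow_le_rpow (lp.norm_nonneg' y) hy hqr0.le
      have hrw : ∀ (x : ℕ → 𝕜) (j : ℕ), (‖x j‖ ^ d) ^ (qr / d) = ‖x j‖ ^ qr := by
        intro x j
        rw [← Real.rpow_natCast ‖x j‖ d, ← Real.rpow_mul (norm_nonneg _)]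
        congr 1
        field_simp
      -- Hölder with shift
      have holder : ∀ n, ∀ x ∈ s,
          (Summable fun k => ‖a (k + n)‖ * ‖x (k + n)‖ ^ d) ∧
          ∑' k, ‖a (k + n)‖ * ‖x (k + n)‖ ^ d ≤
            (∑' k, ‖a (k + n)‖ ^ pr) ^ (1 / pr) * M ^ d := by
        intro n x hx
        obtain ⟨hxs, hxle⟩ := hxsum x hx
        have hfa : Summable fun k => ‖a (k + n)‖ ^ pr :=
          (summable_nat_add_iff (f := fun j => ‖a j‖ ^ pr) n).mpr ha_sum
        have hgx : Summable fun k => (‖x (k + n)‖ ^ d) ^ (qr / d) := by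
          refine ((summable_nat_add_iff (f := fun j => ‖x j‖ ^ qr) n).mpr hxs).congr fun k => ?_
          exact (hrw x (k + n)).symm
        obtain ⟨hS, hle⟩ := Real.summable_and_inner_le_Lp_mul_Lq_tsum_of_nonneg (f := fun k => ‖a (k + n)‖)
          (g := fun k => ‖x (k + n)‖ ^ d) hconj
          (fun k => norm_nonneg (a (k + n))) (fun k => pow_nonneg (norm_nonneg _) d)
          hfa hgx
        refine ⟨hS, hle.trans ?_⟩
        refine mul_le_mul_of_nonneg_left ?_ (Real.rpow_nonneg (tsum_nonneg fun k => by positivity) _)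
        have h2 : ∑' k, (‖x (k + n)‖ ^ d) ^ (qr / d) ≤ M ^ qr := by
          refine le_trans ?_ hxle
          refine Summable.tsum_le_tsum_of_inj (fun k => k + n) (add_left_injective n)
            (fun c _ => by positivity) (fun k => le_of_eq (hrw x (k + n))) hgx hxs
        calc (∑' k, (‖x (k + n)‖ ^ d) ^ (qr / d)) ^ (1 / (qr / d))
            ≤ (M ^ qr) ^ (1 / (qr / d)) := by
              refine Real.rpow_le_rpow (tsum_nonneg fun k => by positivity) h2 (by positivity)
          _ = M ^ (d : ℝ) := by
              rw [← Real.rpow_mul hM.le]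
              congr 1
              field_simp
          _ = M ^ d := Real.rpow_natCast M d
      have hAx : ∀ x ∈ s, Summable fun j => ‖a j * x j ^ d‖ := by
        intro x hx
        have := (holder 0 x hx).1
        simp only [Nat.add_zero] at this
        refine this.congr fun j => ?_
        rw [norm_mul, norm_pow]
      refine ⟨hAx, fun n => (∑' k, ‖a (k + n)‖ ^ pr) ^ (1 / pr) * M ^ d, ?_, ?_⟩
      · have h0 : Filter.Tendsto (fun n => ∑' k, ‖a (k + n)‖ ^ pr)
            Filter.atTop (nhds 0) := tendsto_sum_nat_add (fun j => ‖a j‖ ^ pr)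
        have h1 := (h0.rpow_const (p := 1 / pr) (Or.inr (by positivity))).mul_const (M ^ d)
        have h2 : (0:ℝ) ^ (1 / pr) * M ^ d = 0 := by
          rw [Real.zero_rpow (by positivity), zero_mul]
        rwa [h2] at h1
      · intro n x hx
        have := (holder n x hx).2
        refine le_trans (le_of_eq (tsum_congr fun k => ?_)) this
        rw [norm_mul, norm_pow]
  obtain ⟨hA, t, ht, hB⟩ := key
  have hF : TendstoUniformlyOn (fun n x => ∑ j ∈ Finset.range n, a j * x j ^ d)
      (fun x => ∑' j, a j * x j ^ d) Filter.atTop s := by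
    rw [Metric.tendstoUniformlyOn_iff]
    intro ε hε
    filter_upwards [ht.eventually (gt_mem_nhds hε)] with n hn x hx
    have hsum : Summable fun j => a j * x j ^ d := (hA x hx).of_norm
    calc dist (∑' j, a j * x j ^ d) (∑ j ∈ Finset.range n, a j * x j ^ d)
        = ‖∑' k, a (k + n) * x (k + n) ^ d‖ := by
          rw [dist_eq_norm, ← hsum.sum_add_tsum_nat_add n, add_sub_cancel_left]
      _ ≤ ∑' k, ‖a (k + n) * x (k + n) ^ d‖ :=
          norm_tsum_le_tsum_norm
            ((summable_nat_add_iff (f := fun j => ‖a j * x j ^ d‖) n).mpr (hA x hx))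
      _ ≤ t n := hB n x hx
      _ < ε := hn
  refine hF.continuousOn (Filter.Eventually.of_forall fun n => ?_).frequently
  exact (continuous_finset_sum _ fun j _ =>
    continuous_const.mul ((continuous_apply j).pow d)).continuousOn
end

section
/- Let (p,q) be a Hölder conjugate pair and let M > 0. Let a_i = (a_{i,j})_{j=1}^∞ ∈ ℓ^p for all i ∈ ℕ and let (b_i)_{i∈ℕ} be a sequence of scalars. Suppose that for every r ∈ ℕ and all scalars h_1,…,h_r, one has |∑_{i=1}^r h_i b_i| ≤ M ‖∑_{i=1}^r h_i a_i‖_p. Then there exists x = (x_j)_{j=1}^∞ ∈ ℓ^q with ‖x‖_q ≤ M and ∑_{j=1}^∞ a_{i,j} x_j = b_i for all i ∈ ℕ. -/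
set_option maxHeartbeats 1000000


open scoped ENNReal

/-- **F. Riesz's theorem** ((b) implies (c)): if for every `r` and all scalars
`h_1, …, h_r` one has `‖∑ i, h i * b i‖ ≤ M * ‖∑ i, h i • a i‖_p`, then there exists
`x ∈ ℓ^q` with `‖x‖_q ≤ M` and `∑' j, a i j * x j = b i` for all `i`. -/
theorem riesz_b_implies_c {𝕜 : Type*} [RCLike 𝕜] (p q : ℝ≥0∞)
    (hpq : IsHolderConjugatePair p q) (M : ℝ) (hM : 0 < M)
    (a : ℕ → lp (fun _ : ℕ => 𝕜) p) (b : ℕ → 𝕜)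
    (hineq : ∀ (r : ℕ) (h : Fin r → 𝕜),
      ‖∑ i : Fin r, h i * b i‖ ≤ M * ‖∑ i : Fin r, h i • a i‖) :
    ∃ x : lp (fun _ : ℕ => 𝕜) q,
      ‖x‖ ≤ M ∧ ∀ i : ℕ, ∑' j : ℕ, a i j * x j = b i := by
  have hp1 : 1 ≤ p := by
    rcases hpq with ⟨h, _⟩ | ⟨h, _⟩
    · exact h.le
    · exact h.ge
  have hpt : p ≠ ∞ := by
    rcases hpq with ⟨_, h, _⟩ | ⟨h, _⟩
    · exact h
    · simp [h]
  haveI : Fact (1 ≤ p) := ⟨hp1⟩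
  have hp0 : p ≠ 0 := by
    intro h; rw [h] at hp1; simp at hp1
  have hppos : 0 < p.toReal := ENNReal.toReal_pos hp0 hpt
  -- reformulated hypothesis
  have key : ∀ (s : Finset ℕ) (h : ℕ → 𝕜),
      ‖∑ i ∈ s, h i * b i‖ ≤ M * ‖∑ i ∈ s, h i • a i‖ := by
    intro s h
    obtain ⟨r, hr⟩ : ∃ r, s ⊆ Finset.range r := ⟨(s.sup id) + 1, fun i hi =>
      Finset.mem_range.2 (Nat.lt_succ_of_le (Finset.le_sup (f := id) hi))⟩
    have h1 : ∑ i : Fin r, (if (i : ℕ) ∈ s then h i else 0) * b i = ∑ i ∈ s, h i * b i := by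
      rw [Fin.sum_univ_eq_sum_range (fun i => (if i ∈ s then h i else 0) * b i)]
      rw [← Finset.sum_subset hr (fun i _ hi => by simp [hi])]
      exact Finset.sum_congr rfl fun i hi => by simp [hi]
    have h2 : ∑ i : Fin r, (if (i : ℕ) ∈ s then h i else 0) • a i = ∑ i ∈ s, h i • a i := by
      rw [Fin.sum_univ_eq_sum_range (fun i => (if i ∈ s then h i else 0) • a i)]
      rw [← Finset.sum_subset hr (fun i _ hi => by simp [hi])]
      exact Finset.sum_congr rfl fun i hi => by simp [hi]
    have := hineq r fun i => if (i : ℕ) ∈ s then h i else 0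
    rwa [h1, h2] at this
  -- linear maps
  set T : (ℕ →₀ 𝕜) →ₗ[𝕜] lp (fun _ : ℕ => 𝕜) p := Finsupp.linearCombination 𝕜 a with hT
  set S : (ℕ →₀ 𝕜) →ₗ[𝕜] 𝕜 := Finsupp.linearCombination 𝕜 b with hS
  have keyTS : ∀ c : ℕ →₀ 𝕜, ‖S c‖ ≤ M * ‖T c‖ := by
    intro c
    have hSc : S c = ∑ i ∈ c.support, c i * b i := by
      simp [hS, Finsupp.linearCombination_apply, Finsupp.sum, smul_eq_mul]
    have hTc : T c = ∑ i ∈ c.support, c i • a i := by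
      simp [hT, Finsupp.linearCombination_apply, Finsupp.sum]
    rw [hSc, hTc]; exact key c.support c
  have hker : LinearMap.ker T ≤ LinearMap.ker S := by
    intro c hc
    rw [LinearMap.mem_ker] at hc ⊢
    have := keyTS c
    rw [hc] at this
    simpa using this
  -- the functional on the range of T
  set Sbar : ((ℕ →₀ 𝕜) ⧸ LinearMap.ker T) →ₗ[𝕜] 𝕜 := Submodule.liftQ _ S hker with hSbar
  set g₀ : LinearMap.range T →ₗ[𝕜] 𝕜 :=
    Sbar.comp (T.quotKerEquivRange.symm.toLinearMap) with hg₀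
  have hg₀T : ∀ c : ℕ →₀ 𝕜, g₀ ⟨T c, LinearMap.mem_range_self T c⟩ = S c := by
    intro c
    have h1 : T.quotKerEquivRange (Submodule.Quotient.mk c) =
        ⟨T c, LinearMap.mem_range_self T c⟩ :=
      Subtype.ext (LinearMap.quotKerEquivRange_apply_mk T c)
    have h2 : T.quotKerEquivRange.symm ⟨T c, LinearMap.mem_range_self T c⟩ =
        Submodule.Quotient.mk c := by
      rw [LinearEquiv.symm_apply_eq, h1]
    simp [hg₀, h2, hSbar]
  have hg₀bound : ∀ w : LinearMap.range T, ‖g₀ w‖ ≤ M * ‖w‖ := by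
    rintro ⟨w, hw⟩
    obtain ⟨c, rfl⟩ := hw
    rw [hg₀T c]
    exact keyTS c
  set g : LinearMap.range T →L[𝕜] 𝕜 := g₀.mkContinuous M hg₀bound with hg
  obtain ⟨F, hFe, hFn⟩ := exists_extension_norm_eq (LinearMap.range T) g
  have hFnorm : ‖F‖ ≤ M := hFn ▸ g₀.mkContinuous_norm_le hM.le hg₀bound
  have hFa : ∀ i, F (a i) = b i := by
    intro i
    have h1 : T (Finsupp.single i 1) = a i := by
      simp [hT, Finsupp.linearCombination_single]
    have hmem : a i ∈ LinearMap.range T := ⟨Finsupp.single i 1, h1⟩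
    have h2 : (⟨a i, hmem⟩ : LinearMap.range T) =
        ⟨T (Finsupp.single i 1), LinearMap.mem_range_self T _⟩ := Subtype.ext h1.symm
    calc F (a i) = g ⟨a i, hmem⟩ := hFe ⟨a i, hmem⟩
      _ = g₀ ⟨T (Finsupp.single i 1), LinearMap.mem_range_self T _⟩ := by rw [hg, h2]; rfl
      _ = S (Finsupp.single i 1) := hg₀T _
      _ = b i := by simp [hS, Finsupp.linearCombination_single]
  -- the candidate dual sequence
  set xf : ℕ → 𝕜 := fun j => F (lp.single p j 1) with hxf
  have hFsingle : ∀ (j : ℕ) (c : 𝕜), F (lp.single p j c) = c * xf j := by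
    intro j c
    have : lp.single (E := fun _ : ℕ => 𝕜) p j c = c • lp.single p j (1 : 𝕜) := by
      rw [← lp.single_smul]; simp [smul_eq_mul]
    rw [this, map_smul, smul_eq_mul, hxf]
  have htsum : ∀ (x : lp (fun _ : ℕ => 𝕜) q), (∀ j, x j = xf j) →
      ∀ i, ∑' j : ℕ, a i j * x j = b i := by
    intro x hx i
    have hs : HasSum (fun j : ℕ => lp.single p j (a i j)) (a i) := lp.hasSum_single hpt (a i)
    have hs2 : HasSum (fun j : ℕ => F (lp.single p j (a i j))) (F (a i)) :=
      (F.hasSum hs)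
    have hs3 : HasSum (fun j : ℕ => a i j * x j) (b i) := by
      have : (fun j : ℕ => F (lp.single p j (a i j))) = fun j => a i j * x j := by
        funext j; rw [hFsingle, hx j]
      rwa [this, hFa i] at hs2
    exact hs3.tsum_eq
  -- now split on the two cases of the conjugate pair
  rcases hpq with ⟨hp1', hpt', hq1, hqt, hsum⟩ | ⟨hp1', hqt⟩
  · -- finite case
    set pr := p.toReal with hpr
    set qr := q.toReal with hqr
    have hq0 : q ≠ 0 := by intro h; rw [h] at hq1; simp at hq1
    have hqrpos : 0 < qr := ENNReal.toReal_pos hq0 hqt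
    have hpr1 : 1 < pr := by
      have := (ENNReal.toReal_lt_toReal (by simp) hpt).mpr hp1'
      simpa using this
    have hqr1 : 1 < qr := by
      have := (ENNReal.toReal_lt_toReal (by simp) hqt).mpr hq1
      simpa using this
    have hconjsum : 1 / pr + 1 / qr = 1 := by
      have h1 : 1 / p ≠ ∞ := by
        simp only [one_div, Ne, ENNReal.inv_eq_top]; exact hp0
      have h2 : 1 / q ≠ ∞ := by
        simp only [one_div, Ne, ENNReal.inv_eq_top]; exact hq0
      have := congrArg ENNReal.toReal hsum
      rwa [ENNReal.toReal_add h1 h2, ENNReal.toReal_div, ENNReal.toReal_div,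
        ENNReal.toReal_one] at this
    have hconj : pr.HolderConjugate qr := ⟨by
      rw [inv_one, ← one_div, ← one_div]; exact hconjsum, by linarith, hqrpos⟩
    have hbound : ∀ s : Finset ℕ, ∑ j ∈ s, ‖xf j‖ ^ qr ≤ M ^ qr := by
      intro s
      set Sr := ∑ j ∈ s, ‖xf j‖ ^ qr with hSr
      have hSrnn : 0 ≤ Sr :=
        Finset.sum_nonneg fun j _ => Real.rpow_nonneg (norm_nonneg _) _
      set c : ℕ → 𝕜 := fun j =>
        if xf j = 0 then 0 else (starRingEnd 𝕜) (xf j) * ((‖xf j‖ ^ (qr - 2) : ℝ) : 𝕜)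
        with hc
      have hcx : ∀ j, c j * xf j = ((‖xf j‖ ^ qr : ℝ) : 𝕜) := by
        intro j
        by_cases h0 : xf j = 0
        · simp [hc, h0, Real.zero_rpow hqrpos.ne']
        · have hpos : 0 < ‖xf j‖ := norm_pos_iff.mpr h0
          rw [hc]
          simp only [h0, if_false]
          rw [mul_assoc, mul_comm ((‖xf j‖ ^ (qr - 2) : ℝ) : 𝕜) (xf j), ← mul_assoc,
            RCLike.conj_mul]
          rw [← RCLike.ofReal_pow, ← RCLike.ofReal_mul]
          congr 1
          rw [← Real.rpow_natCast ‖xf j‖ 2, ← Real.rpow_add hpos]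
          norm_num
      have hcn : ∀ j, ‖c j‖ = ‖xf j‖ ^ (qr - 1) := by
        intro j
        by_cases h0 : xf j = 0
        · rw [hc]; simp only [h0, if_true, norm_zero]
          exact (Real.zero_rpow (by linarith : qr - 1 ≠ 0)).symm
        · have hpos : 0 < ‖xf j‖ := norm_pos_iff.mpr h0
          rw [hc]
          simp only [h0, if_false]
          rw [norm_mul, RCLike.norm_conj, RCLike.norm_ofReal,
            abs_of_nonneg (Real.rpow_nonneg (norm_nonneg _) _)]
          rw [show qr - 1 = 1 + (qr - 2) by ring, Real.rpow_add hpos, Real.rpow_one]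
      set y : lp (fun _ : ℕ => 𝕜) p := ∑ j ∈ s, lp.single p j (c j) with hy
      have hFy : F y = ((Sr : ℝ) : 𝕜) := by
        rw [hy, map_sum]
        have : ∀ j ∈ s, F (lp.single p j (c j)) = ((‖xf j‖ ^ qr : ℝ) : 𝕜) := by
          intro j _
          rw [hFsingle, hcx]
        rw [Finset.sum_congr rfl this, hSr]
        push_cast
        ring_nf
      have hyn : ‖y‖ ^ pr = Sr := by
        rw [hy, lp.norm_sum_single hppos c s, hSr]
        refine Finset.sum_congr rfl fun j _ => ?_
        rw [hcn j, ← Real.rpow_mul (norm_nonneg _), hconj.symm.sub_one_mul_conj]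
      have hylen : ‖y‖ = Sr ^ (1 / pr) := by
        rw [← hyn, ← Real.rpow_mul (norm_nonneg _), mul_one_div, div_self hppos.ne',
          Real.rpow_one]
      have hmain : Sr ≤ M * Sr ^ (1 / pr) := by
        have h1 := F.le_opNorm y
        rw [hFy, RCLike.norm_ofReal, abs_of_nonneg hSrnn, hylen] at h1
        calc Sr ≤ ‖F‖ * Sr ^ (1 / pr) := h1
          _ ≤ M * Sr ^ (1 / pr) :=
            mul_le_mul_of_nonneg_right hFnorm (Real.rpow_nonneg hSrnn _)
      by_cases hS0 : Sr = 0
      · rw [hS0] at hmain ⊢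
        exact Real.rpow_nonneg hM.le _
      · have hSpos : 0 < Sr := lt_of_le_of_ne hSrnn (Ne.symm hS0)
        have hsplit : Sr = Sr ^ (1 / qr) * Sr ^ (1 / pr) := by
          rw [← Real.rpow_add hSpos, add_comm, hconjsum, Real.rpow_one]
        have h2 : Sr ^ (1 / qr) * Sr ^ (1 / pr) ≤ M * Sr ^ (1 / pr) :=
          le_trans (le_of_eq hsplit.symm) hmain
        have h3 : Sr ^ (1 / qr) ≤ M :=
          le_of_mul_le_mul_right h2 (Real.rpow_pos_of_pos hSpos _)
        calc Sr = (Sr ^ (1 / qr)) ^ qr := by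
              rw [← Real.rpow_mul hSrnn, one_div, inv_mul_cancel₀ hqrpos.ne', Real.rpow_one]
          _ ≤ M ^ qr := Real.rpow_le_rpow (Real.rpow_nonneg hSrnn _) h3 hqrpos.le
    have hmem : Memℓp xf q := memℓp_gen' (C := M ^ qr) (fun s => hbound s)
    haveI : Fact (1 ≤ q) := ⟨hq1.le⟩
    refine ⟨⟨xf, hmem⟩, ?_, htsum _ (fun j => rfl)⟩
    exact lp.norm_le_of_forall_sum_le hqrpos hM.le fun s => hbound s
  · -- case q = ∞
    subst hqt
    have hb : ∀ j, ‖xf j‖ ≤ M := by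
      intro j
      calc ‖xf j‖ = ‖F (lp.single p j (1 : 𝕜))‖ := rfl
        _ ≤ ‖F‖ * ‖lp.single (E := fun _ : ℕ => 𝕜) p j (1 : 𝕜)‖ := F.le_opNorm _
        _ = ‖F‖ := by
            rw [lp.norm_single (E := fun _ : ℕ => 𝕜) (pos_iff_ne_zero.mpr hp0) j (1 : 𝕜), norm_one, mul_one]
        _ ≤ M := hFnorm
    have hmem : Memℓp xf ∞ := memℓp_infty ⟨M, by rintro r ⟨j, rfl⟩; exact hb j⟩
    refine ⟨⟨xf, hmem⟩, ?_, htsum _ (fun j => rfl)⟩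
    exact lp.norm_le_of_forall_le hM.le hb
end

section
/- Let (p,q) be a Hölder conjugate pair and let M > 0. Let a_i = (a_{i,j})_{j=1}^∞ ∈ ℓ^p for all i ∈ ℕ and let (b_i)_{i∈ℕ} be a sequence of scalars. Then the following are equivalent: (a) for every r ∈ ℕ there exists x_r ∈ ℓ^q with ‖x_r‖_q ≤ M and ∑_{j=1}^∞ a_{i,j} x_{r,j} = b_i for all i ∈ {1,…,r}; (b) for every r ∈ ℕ and all scalars h_1,…,h_r, |∑_{i=1}^r h_i b_i| ≤ M ‖∑_{i=1}^r h_i a_i‖_p; (c) there exists x ∈ ℓ^q with ‖x‖_q ≤ M and ∑_{j=1}^∞ a_{i,j} x_j = b_i for all i ∈ ℕ. -/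
open scoped ENNReal

namespace RAE

variable {𝕜 : Type*} [RCLike 𝕜] {p q : ℝ≥0∞}

lemma one_le_p (hpq : IsHolderConjugatePair p q) : 1 ≤ p := by
  rcases hpq with ⟨h, _⟩ | ⟨h, _⟩ <;> simp [h.le, h]

lemma one_le_q (hpq : IsHolderConjugatePair p q) : 1 ≤ q := by
  rcases hpq with ⟨_, _, h, _⟩ | ⟨_, h⟩ <;> simp [h.le, h]

lemma p_ne_top (hpq : IsHolderConjugatePair p q) : p ≠ ∞ := by
  rcases hpq with ⟨_, h, _⟩ | ⟨h, _⟩ <;> simp [h]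

lemma p_toReal_pos (hpq : IsHolderConjugatePair p q) : 0 < p.toReal :=
  ENNReal.toReal_pos (by have := one_le_p hpq; positivity) (p_ne_top hpq)

lemma conj_exponent (h1p : 1 < p) (hp : p ≠ ∞) (h1q : 1 < q) (hq : q ≠ ∞)
    (hsum : 1 / p + 1 / q = 1) : p.toReal.HolderConjugate q.toReal := by
  have hp0 : p ≠ 0 := by positivity
  have hq0 : q ≠ 0 := by positivity
  rw [Real.holderConjugate_iff]
  constructor
  · rw [← ENNReal.toReal_one]
    exact ENNReal.toReal_strict_mono hp h1p
  · have := congrArg ENNReal.toReal hsum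
    rwa [ENNReal.toReal_add (by simp [ENNReal.div_eq_top, hp0]) (by simp [ENNReal.div_eq_top, hq0]),
      ENNReal.toReal_div, ENNReal.toReal_div, ENNReal.toReal_one, one_div, one_div] at this

/-- Hölder's inequality for `ℓ^p`/`ℓ^q`, covering both the finite case and `p = 1, q = ∞`. -/
lemma holder (hpq : IsHolderConjugatePair p q) (c : lp (fun _ : ℕ => 𝕜) p)
    (x : lp (fun _ : ℕ => 𝕜) q) :
    Summable (fun j => c j * x j) ∧ ‖∑' j, c j * x j‖ ≤ ‖c‖ * ‖x‖ := by
  rcases hpq with ⟨h1p, hp, h1q, hq, hsum⟩ | ⟨hp1, hq⟩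
  · have hc := conj_exponent h1p hp h1q hq hsum
    obtain ⟨hs, hb⟩ := lp.tsum_mul_le_mul_norm hc c x
    have hs' : Summable fun j => c j * x j := by
      refine Summable.of_norm ?_
      simpa [norm_mul] using hs
    refine ⟨hs', ?_⟩
    refine le_trans (norm_tsum_le_tsum_norm ?_) ?_
    · simpa [norm_mul] using hs
    · simpa [norm_mul] using hb
  · subst hp1 hq
    have hc1 : Summable fun j => ‖c j‖ := by
      have := (lp.memℓp c).summable (by norm_num)
      simpa using this
    have hxb : ∀ j, ‖x j‖ ≤ ‖x‖ := fun j => lp.norm_apply_le_norm (by norm_num) x j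
    have hs : Summable fun j => ‖c j * x j‖ := by
      refine Summable.of_nonneg_of_le (fun j => norm_nonneg _) (fun j => ?_) (hc1.mul_right ‖x‖)
      rw [norm_mul]
      exact mul_le_mul_of_nonneg_left (hxb j) (norm_nonneg _)
    refine ⟨Summable.of_norm hs, ?_⟩
    refine le_trans (norm_tsum_le_tsum_norm hs) ?_
    have hnc : ‖c‖ = ∑' j, ‖c j‖ := by
      rw [lp.norm_eq_tsum_rpow (by norm_num) c]
      simp
    rw [hnc, ← tsum_mul_right]
    refine Summable.tsum_le_tsum (fun j => ?_) hs (hc1.mul_right ‖x‖)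
    rw [norm_mul]
    exact mul_le_mul_of_nonneg_left (hxb j) (norm_nonneg _)

section FactP
variable [Fact (1 ≤ p)]

/-- From the inequality (b) obtain a continuous linear functional `g` on `ℓ^p`
with `‖g‖ ≤ M` and `g (a i) = b i`. -/
lemma exists_functional (M : ℝ) (hM : 0 < M) (a : ℕ → lp (fun _ : ℕ => 𝕜) p) (b : ℕ → 𝕜)
    (h2 : ∀ (r : ℕ) (h : Fin r → 𝕜),
        ‖∑ i : Fin r, h i * b i‖ ≤ M * ‖∑ i : Fin r, h i • a i‖) :
    ∃ g : lp (fun _ : ℕ => 𝕜) p →L[𝕜] 𝕜, ‖g‖ ≤ M ∧ ∀ i, g (a i) = b i := by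
  classical
  set L : (ℕ →₀ 𝕜) →ₗ[𝕜] lp (fun _ : ℕ => 𝕜) p := Finsupp.linearCombination 𝕜 a with hL
  set B : (ℕ →₀ 𝕜) →ₗ[𝕜] 𝕜 := Finsupp.linearCombination 𝕜 b with hB
  have hbound : ∀ h : ℕ →₀ 𝕜, ‖B h‖ ≤ M * ‖L h‖ := by
    intro h
    set r : ℕ := h.support.sup id + 1 with hr
    have hsub : h.support ⊆ Finset.range r := by
      intro i hi
      simp only [Finset.mem_range, hr]
      exact Nat.lt_succ_of_le (Finset.le_sup (f := id) hi)
    have hBr : B h = ∑ i : Fin r, h (i : ℕ) * b (i : ℕ) := by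
      rw [Fin.sum_univ_eq_sum_range (fun i => h i * b i) r, hB,
        Finsupp.linearCombination_apply, Finsupp.sum]
      rw [Finset.sum_subset hsub (fun i _ hi => by
        simp [Finsupp.notMem_support_iff.mp hi])]
      simp [smul_eq_mul]
    have hLr : L h = ∑ i : Fin r, h (i : ℕ) • a (i : ℕ) := by
      rw [Fin.sum_univ_eq_sum_range (fun i => h i • a i) r, hL,
        Finsupp.linearCombination_apply, Finsupp.sum]
      rw [Finset.sum_subset hsub (fun i _ hi => by
        simp [Finsupp.notMem_support_iff.mp hi])]
    rw [hBr, hLr]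
    exact h2 r fun i => h (i : ℕ)
  have hker : LinearMap.ker L ≤ LinearMap.ker B := by
    intro h hh
    rw [LinearMap.mem_ker] at hh ⊢
    have := hbound h
    rw [hh, norm_zero, mul_zero] at this
    exact norm_le_zero_iff.mp this
  set φ : ↥(LinearMap.range L) →ₗ[𝕜] 𝕜 :=
    (Submodule.liftQ _ B hker).comp (L.quotKerEquivRange.symm : _ →ₗ[𝕜] _) with hφ
  have hφa : ∀ h : ℕ →₀ 𝕜, φ ⟨L h, LinearMap.mem_range_self L h⟩ = B h := by
    intro h
    have he : L.quotKerEquivRange (Submodule.Quotient.mk h)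
        = ⟨L h, LinearMap.mem_range_self L h⟩ :=
      Subtype.ext (LinearMap.quotKerEquivRange_apply_mk L h)
    rw [hφ, LinearMap.comp_apply, ← he, LinearEquiv.coe_coe, LinearEquiv.symm_apply_apply,
      Submodule.liftQ_apply]
  have hφb : ∀ y : ↥(LinearMap.range L), ‖φ y‖ ≤ M * ‖y‖ := by
    rintro ⟨y, hy⟩
    obtain ⟨h, rfl⟩ := hy
    rw [hφa h]
    exact hbound h
  set f₀ : ↥(LinearMap.range L) →L[𝕜] 𝕜 := LinearMap.mkContinuous φ M hφb with hf₀
  obtain ⟨g, hg, hgn⟩ := exists_extension_norm_eq (LinearMap.range L) f₀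
  refine ⟨g, ?_, ?_⟩
  · rw [hgn]
    exact LinearMap.mkContinuous_norm_le φ hM.le hφb
  · intro i
    have ha : L (Finsupp.single i 1) = a i := by
      simp [hL, Finsupp.linearCombination_single]
    have h1 : g (a i) = f₀ ⟨a i, ha ▸ LinearMap.mem_range_self L (Finsupp.single i 1)⟩ :=
      hg ⟨a i, _⟩
    rw [h1, hf₀]
    have h2' : φ ⟨a i, ha ▸ LinearMap.mem_range_self L (Finsupp.single i 1)⟩ = b i := by
      have := hφa (Finsupp.single i 1)
      simp only [ha] at this
      rw [this, hB]
      simp [Finsupp.linearCombination_single]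
    exact h2'

lemma apply_single (g : lp (fun _ : ℕ => 𝕜) p →L[𝕜] 𝕜) (j : ℕ) (c : 𝕜) :
    g (lp.single p j c) = c * g (lp.single p j 1) := by
  have h1 := lp.single_smul (E := fun _ : ℕ => 𝕜) p j c (1 : 𝕜)
  simp only [smul_eq_mul, mul_one] at h1
  rw [h1, map_smul, smul_eq_mul]

lemma hasSum_rep (hp : p ≠ ∞) (g : lp (fun _ : ℕ => 𝕜) p →L[𝕜] 𝕜)
    (y : lp (fun _ : ℕ => 𝕜) p) :
    HasSum (fun j => y j * g (lp.single p j 1)) (g y) := by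
  have h := (lp.hasSum_single hp y).mapL g
  exact h.congr_fun fun j => (apply_single g j (y j)).symm

lemma sum_q_bound (hpq' : p.toReal.HolderConjugate q.toReal)
    (g : lp (fun _ : ℕ => 𝕜) p →L[𝕜] 𝕜) (M : ℝ) (hM : 0 < M) (hg : ‖g‖ ≤ M)
    (s : Finset ℕ) :
    ∑ j ∈ s, ‖g (lp.single p j 1)‖ ^ q.toReal ≤ M ^ q.toReal := by
  classical
  have hppos : 0 < p.toReal := hpq'.pos
  have hq1 : 1 < q.toReal := hpq'.symm.lt
  have hq0 : 0 < q.toReal := by linarith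
  set x' : ℕ → 𝕜 := fun j => g (lp.single p j 1) with hx'
  set u : ℕ → 𝕜 := fun j => starRingEnd 𝕜 (x' j) * ((‖x' j‖ ^ (q.toReal - 2) : ℝ) : 𝕜) with hu
  have hux : ∀ j, u j * x' j = ((‖x' j‖ ^ q.toReal : ℝ) : 𝕜) := by
    intro j
    by_cases hx : x' j = 0
    · simp [hu, hx, Real.zero_rpow (ne_of_gt hq0)]
    · have hxp : 0 < ‖x' j‖ := norm_pos_iff.mpr hx
      rw [hu]
      simp only
      rw [mul_comm (starRingEnd 𝕜 (x' j)), mul_assoc, RCLike.conj_mul, ← RCLike.ofReal_pow,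
        ← RCLike.ofReal_mul]
      congr 1
      rw [← Real.rpow_natCast ‖x' j‖ 2, ← Real.rpow_add hxp]
      norm_num
  have hun : ∀ j, ‖u j‖ = ‖x' j‖ ^ (q.toReal - 1) := by
    intro j
    by_cases hx : x' j = 0
    · simp [hu, hx]
      rw [Real.zero_rpow (by linarith : q.toReal - 1 ≠ 0)]
    · have hxp : 0 < ‖x' j‖ := norm_pos_iff.mpr hx
      rw [hu]
      simp only [norm_mul, RCLike.norm_conj, RCLike.norm_ofReal,
        abs_of_nonneg (Real.rpow_nonneg (norm_nonneg _) _)]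
      calc ‖x' j‖ * ‖x' j‖ ^ (q.toReal - 2)
          = ‖x' j‖ ^ (1 : ℝ) * ‖x' j‖ ^ (q.toReal - 2) := by rw [Real.rpow_one]
        _ = ‖x' j‖ ^ (q.toReal - 1) := by rw [← Real.rpow_add hxp]; ring_nf
  set y : lp (fun _ : ℕ => 𝕜) p := ∑ j ∈ s, lp.single p j (u j) with hy
  set S : ℝ := ∑ j ∈ s, ‖x' j‖ ^ q.toReal with hS
  have hS0 : 0 ≤ S :=
    Finset.sum_nonneg fun j _ => Real.rpow_nonneg (norm_nonneg _) _
  have hgy : g y = ((S : ℝ) : 𝕜) := by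
    rw [hy, map_sum, hS]
    push_cast
    exact Finset.sum_congr rfl fun j _ => by rw [apply_single]; exact hux j
  have hyn : ‖y‖ ^ p.toReal = S := by
    rw [hy, lp.norm_sum_single hppos, hS]
    refine Finset.sum_congr rfl fun j _ => ?_
    rw [hun j, ← Real.rpow_mul (norm_nonneg _), hpq'.symm.sub_one_mul_conj]
  have hbound : S ≤ M * ‖y‖ := by
    calc S = ‖g y‖ := by rw [hgy, RCLike.norm_ofReal, abs_of_nonneg hS0]
      _ ≤ ‖g‖ * ‖y‖ := g.le_opNorm y
      _ ≤ M * ‖y‖ := mul_le_mul_of_nonneg_right hg (norm_nonneg y)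
  show S ≤ M ^ q.toReal
  rcases eq_or_lt_of_le hS0 with hSz | hSpos
  · rw [← hSz]
    positivity
  · have hy0 : 0 < ‖y‖ := by
      rcases (norm_nonneg y).eq_or_lt with h0 | h0
      · exfalso
        have : ‖y‖ ^ p.toReal = 0 := by
          rw [← h0, Real.zero_rpow (ne_of_gt hppos)]
        rw [hyn] at this
        exact absurd this (ne_of_gt hSpos)
      · exact h0
    have hyS : ‖y‖ = S ^ (1 / p.toReal) := by
      rw [← hyn, ← Real.rpow_mul (norm_nonneg y), mul_one_div,
        div_self (ne_of_gt hppos), Real.rpow_one]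
    have key : S ^ (1 / q.toReal) ≤ M := by
      have h1 : S ^ (1 / q.toReal) * S ^ (1 / p.toReal) = S := by
        rw [← Real.rpow_add hSpos, one_div, one_div, add_comm,
          hpq'.inv_add_inv_eq_one, Real.rpow_one]
      have h2 : S ≤ M * S ^ (1 / p.toReal) := hyS ▸ hbound
      have h2' : S ^ (1 / q.toReal) * S ^ (1 / p.toReal) ≤ M * S ^ (1 / p.toReal) := by
        rw [h1]; exact h2
      exact le_of_mul_le_mul_right h2' (Real.rpow_pos_of_pos hSpos _)
    calc S = (S ^ (1 / q.toReal)) ^ q.toReal := by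
          rw [← Real.rpow_mul hS0, one_div, inv_mul_cancel₀ (ne_of_gt hq0), Real.rpow_one]
      _ ≤ M ^ q.toReal := Real.rpow_le_rpow (Real.rpow_nonneg hS0 _) key (le_of_lt hq0)

end FactP

end RAE

open RAE

/-- **The Riesz/Abian–Eslami equivalence.** For a Hölder conjugate pair `(p,q)`,
`M > 0`, sequences `a i ∈ ℓ^p` and scalars `b i`, the following are equivalent:
(a) for every `r` the first `r` equations `∑' j, a i j * x j = b i` have a solution
`x ∈ ℓ^q` with `‖x‖_q ≤ M`;
(b) for every `r` and all scalars `h_1, …, h_r`,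
`‖∑ i, h i * b i‖ ≤ M * ‖∑ i, h i • a i‖_p`;
(c) there exists `x ∈ ℓ^q` with `‖x‖_q ≤ M` and `∑' j, a i j * x j = b i` for all
`i`. -/
theorem riesz_abian_eslami_tfae {𝕜 : Type*} [RCLike 𝕜] (p q : ℝ≥0∞)
    (hpq : IsHolderConjugatePair p q) (M : ℝ) (hM : 0 < M)
    (a : ℕ → lp (fun _ : ℕ => 𝕜) p) (b : ℕ → 𝕜) :
    List.TFAE
      [∀ r : ℕ, ∃ x : lp (fun _ : ℕ => 𝕜) q,
          ‖x‖ ≤ M ∧ ∀ i < r, ∑' j : ℕ, a i j * x j = b i,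
        ∀ (r : ℕ) (h : Fin r → 𝕜),
          ‖∑ i : Fin r, h i * b i‖ ≤ M * ‖∑ i : Fin r, h i • a i‖,
        ∃ x : lp (fun _ : ℕ => 𝕜) q,
          ‖x‖ ≤ M ∧ ∀ i : ℕ, ∑' j : ℕ, a i j * x j = b i] := by
  haveI : Fact (1 ≤ p) := ⟨one_le_p hpq⟩
  haveI : Fact (1 ≤ q) := ⟨one_le_q hpq⟩
  tfae_have 3 → 1
  | ⟨x, hx, hxe⟩ => fun r => ⟨x, hx, fun i _ => hxe i⟩
  tfae_have 1 → 2
  | h1 => by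
    intro r h
    obtain ⟨x, hx, hxe⟩ := h1 r
    set c : lp (fun _ : ℕ => 𝕜) p := ∑ i : Fin r, h i • a i with hc
    have hcj : ∀ j, c j = ∑ i : Fin r, h i * a i j := by
      intro j
      simp [hc, lp.coeFn_sum, lp.coeFn_smul, Finset.sum_apply, smul_eq_mul]
      exact Finset.sum_apply j _ _
    have hsum : ∀ i : Fin r, Summable fun j => a (i : ℕ) j * x j :=
      fun i => (holder hpq (a i) x).1
    have key : ∑ i : Fin r, h i * b i = ∑' j, c j * x j := by
      calc ∑ i : Fin r, h i * b i
          = ∑ i : Fin r, ∑' j, h i * (a (i : ℕ) j * x j) := by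
            refine Finset.sum_congr rfl fun i _ => ?_
            rw [tsum_mul_left, hxe i i.2]
        _ = ∑' j, ∑ i : Fin r, h i * (a (i : ℕ) j * x j) :=
            (Summable.tsum_finsetSum fun i _ => (hsum i).mul_left (h i)).symm
        _ = ∑' j, c j * x j := by
            refine tsum_congr fun j => ?_
            rw [hcj j, Finset.sum_mul]
            exact Finset.sum_congr rfl fun i _ => by ring
    rw [key]
    calc ‖∑' j, c j * x j‖ ≤ ‖c‖ * ‖x‖ := (holder hpq c x).2
      _ ≤ ‖c‖ * M := mul_le_mul_of_nonneg_left hx (lp.norm_nonneg' _)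
      _ = M * ‖c‖ := mul_comm _ _
  tfae_have 2 → 3
  | h2 => by
    obtain ⟨g, hgM, hga⟩ := exists_functional M hM a b h2
    have hpt : p ≠ ∞ := p_ne_top hpq
    rcases hpq with ⟨h1p, hp, h1q, hq, hsum⟩ | ⟨hp1, hq1⟩
    · -- finite q
      have hpq' := conj_exponent h1p hp h1q hq hsum
      have hqpos : 0 < q.toReal := hpq'.symm.pos
      have hmem : Memℓp (fun j => g (lp.single p j 1)) q :=
        memℓp_gen' (C := M ^ q.toReal) (fun s => by
          simpa using sum_q_bound hpq' g M hM hgM s)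
      refine ⟨⟨_, hmem⟩, ?_, ?_⟩
      · refine lp.norm_le_of_forall_sum_le hqpos hM.le fun s => ?_
        simpa using sum_q_bound hpq' g M hM hgM s
      · intro i
        have := (hasSum_rep hpt g (a i)).tsum_eq
        rw [hga i] at this
        exact this
    · -- q = ∞
      subst hq1
      have hble : ∀ j, ‖g (lp.single p j 1)‖ ≤ M := by
        intro j
        have hppos : 0 < p.toReal := by rw [hp1]; norm_num
        have h1 : ‖(lp.single p j 1 : lp (fun _ : ℕ => 𝕜) p)‖ = 1 := by
          have h2 := lp.norm_single (E := fun _ : ℕ => 𝕜) (ENNReal.toReal_pos_iff.mp hppos).1 j (1 : 𝕜)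
          simpa using h2
        calc ‖g (lp.single p j 1)‖ ≤ ‖g‖ * ‖(lp.single p j 1 : lp (fun _ : ℕ => 𝕜) p)‖ :=
              g.le_opNorm _
          _ = ‖g‖ := by rw [h1, mul_one]
          _ ≤ M := hgM
      have hmem : Memℓp (fun j => g (lp.single p j 1)) ∞ :=
        memℓp_infty ⟨M, by rintro - ⟨j, rfl⟩; exact hble j⟩
      refine ⟨⟨_, hmem⟩, ?_, ?_⟩
      · exact lp.norm_le_of_forall_le hM.le hble
      · intro i
        have := (hasSum_rep hpt g (a i)).tsum_eq
        rw [hga i] at this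
        exact this
  tfae_finish
end

section
/- Let (p,q) be a Hölder conjugate pair and let a = (a_j)_{j=1}^∞ ∈ ℓ^p with a_j ≠ 0 for all j ∈ ℕ. For r ∈ ℕ let a_r^{tail} denote the sequence whose j-th term is 0 for j < r and a_j for j ≥ r. If x_r ∈ ℓ^q satisfies ∑_{j=i}^∞ a_j x_{r,j} = 1 for all i ∈ {1,…,r}, then ‖x_r‖_q ≥ 1/‖a_r^{tail}‖_p. Consequently, since lim_{r→∞} ‖a_r^{tail}‖_p = 0, any sequence (x_r)_{r=1}^∞ of solutions of the first r equations of the triangular system satisfies lim_{r→∞} ‖x_r‖_q = ∞ and is not uniformly bounded in ℓ^q. -/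
open scoped ENNReal

/-- The `ℓ^p`-norm `‖a_r^{tail}‖_p` of the tail sequence whose `j`-th term is `0` for
`j < r` and `a j` for `j ≥ r`. -/
noncomputable def tailNorm (p : ℝ≥0∞) {𝕜 : Type*} [RCLike 𝕜] (a : ℕ → 𝕜) (r : ℕ) : ℝ :=
  (∑' j : ℕ, (if r ≤ j then ‖a j‖ else 0) ^ p.toReal) ^ (1 / p.toReal)

/-- Any `x ∈ ℓ^q` solving the first `r` equations `∑_{j ≥ i} a j * x j = 1`
(`i ≤ r`) of the triangular system satisfies `‖x‖_q ≥ 1/‖a_r^{tail}‖_p`.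
Consequently, since `‖a_r^{tail}‖_p → 0`, any sequence `(x_r)` of such solutions
satisfies `‖x_r‖_q → ∞`, so it is not uniformly bounded in `ℓ^q`. -/
theorem helly_solutions_unbounded {𝕜 : Type*} [RCLike 𝕜] (p q : ℝ≥0∞)
    (hpq : IsHolderConjugatePair p q)
    (a : ℕ → 𝕜) (ha : Memℓp a p) (ha0 : ∀ j, a j ≠ 0) :
    (∀ (r : ℕ) (x : lp (fun _ : ℕ => 𝕜) q),
      (∀ i ≤ r, ∑' j : ℕ, (if i ≤ j then a j * x j else 0) = 1) →
      (tailNorm p a r)⁻¹ ≤ ‖x‖) ∧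
    Filter.Tendsto (fun r : ℕ => tailNorm p a r) Filter.atTop (nhds 0) ∧
    (∀ xs : ℕ → lp (fun _ : ℕ => 𝕜) q,
      (∀ r : ℕ, ∀ i ≤ r, ∑' j : ℕ, (if i ≤ j then a j * xs r j else 0) = 1) →
      Filter.Tendsto (fun r : ℕ => ‖xs r‖) Filter.atTop Filter.atTop) := by
  -- basic facts about the exponents
  have hp_ne_top : p ≠ ∞ := by
    rcases hpq with ⟨_, h, _⟩ | ⟨h, _⟩
    · exact h
    · simp [h]
  have hp_ne_zero : p ≠ 0 := by
    rcases hpq with ⟨h, _⟩ | ⟨h, _⟩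
    · exact (zero_lt_one.trans h).ne'
    · simp [h]
  have hpt : 0 < p.toReal := ENNReal.toReal_pos hp_ne_zero hp_ne_top
  set g : ℕ → ℝ := fun j => ‖a j‖ ^ p.toReal with hg_def
  have hg : Summable g := ha.summable hpt
  have hg_nonneg : ∀ j, 0 ≤ g j := fun j => Real.rpow_nonneg (norm_nonneg _) _
  have hg_pos : ∀ j, 0 < g j := fun j =>
    Real.rpow_pos_of_pos (norm_pos_iff.2 (ha0 j)) _
  -- rewrite the tail norm
  have h_ite_sum : ∀ r : ℕ,
      (∑' j : ℕ, (if r ≤ j then ‖a j‖ else 0) ^ p.toReal)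
        = ∑' j : ℕ, (if r ≤ j then g j else 0) := by
    intro r
    congr 1
    funext j
    by_cases h : r ≤ j <;> simp [h, Real.zero_rpow hpt.ne', hg_def]
  have hsummable_ite : ∀ r : ℕ, Summable (fun j => if r ≤ j then g j else 0) := by
    intro r
    refine Summable.of_nonneg_of_le (fun j => ?_) (fun j => ?_) hg
    · by_cases h : r ≤ j <;> simp [h, hg_nonneg j]
    · by_cases h : r ≤ j <;> simp [h, hg_nonneg j]
  have hS_pos : ∀ r : ℕ, 0 < ∑' j : ℕ, (if r ≤ j then g j else 0) := by
    intro r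
    refine Summable.tsum_pos (hsummable_ite r) (fun j => ?_) r ?_
    · by_cases h : r ≤ j <;> simp [h, hg_nonneg j]
    · simp [hg_pos r]
  have hT_eq : ∀ r : ℕ, tailNorm p a r
      = (∑' j : ℕ, (if r ≤ j then g j else 0)) ^ (1 / p.toReal) := by
    intro r
    rw [tailNorm, h_ite_sum r]
  have hT_pos : ∀ r : ℕ, 0 < tailNorm p a r := by
    intro r
    rw [hT_eq r]
    exact Real.rpow_pos_of_pos (hS_pos r) _
  -- Part 1 : the lower bound
  have part1 : ∀ (r : ℕ) (x : lp (fun _ : ℕ => 𝕜) q),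
      (∀ i ≤ r, ∑' j : ℕ, (if i ≤ j then a j * x j else 0) = 1) →
      (tailNorm p a r)⁻¹ ≤ ‖x‖ := by
    intro r x hx
    have hxr : ∑' j : ℕ, (if r ≤ j then a j * x j else 0) = 1 := hx r le_rfl
    -- the tail sequence as an element of ℓ^p
    set b : ℕ → 𝕜 := fun j => if r ≤ j then a j else 0 with hb_def
    have hb_norm : ∀ j, ‖b j‖ = if r ≤ j then ‖a j‖ else 0 := by
      intro j; by_cases h : r ≤ j <;> simp [hb_def, h]
    have hb_norm_rpow : ∀ j, ‖b j‖ ^ p.toReal = if r ≤ j then g j else 0 := by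
      intro j
      rw [hb_norm j]
      by_cases h : r ≤ j <;> simp [h, Real.zero_rpow hpt.ne', hg_def]
    have hb : Memℓp b p := by
      apply memℓp_gen
      simpa only [hb_norm_rpow] using hsummable_ite r
    set B : lp (fun _ : ℕ => 𝕜) p := ⟨b, hb⟩ with hB_def
    have hB_apply : ∀ j, B j = b j := fun j => rfl
    have hB_norm : ‖B‖ = tailNorm p a r := by
      rw [lp.norm_eq_tsum_rpow hpt, tailNorm, h_ite_sum r]
      congr 1
      exact tsum_congr fun j => by rw [hB_apply, hb_norm_rpow]
    -- Hölder's inequality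
    have holder : Summable (fun j => ‖b j‖ * ‖x j‖) ∧
        ∑' j, ‖b j‖ * ‖x j‖ ≤ ‖B‖ * ‖x‖ := by
      rcases hpq with ⟨hp1, hpne, hq1, hqne, hsum⟩ | ⟨hp1, hqtop⟩
      · -- finite case
        have hqt : 0 < q.toReal := ENNReal.toReal_pos (zero_lt_one.trans hq1).ne' hqne
        have hconj : p.toReal.HolderConjugate q.toReal := by
          rw [Real.holderConjugate_iff]
          constructor
          · rw [← ENNReal.toReal_one]
            exact (ENNReal.toReal_lt_toReal ENNReal.one_ne_top hpne).2 hp1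
          · have h1p : (1 / p) ≠ ∞ := by
              simp only [one_div]
              exact ENNReal.inv_ne_top.2 hp_ne_zero
            have h1q : (1 / q) ≠ ∞ := by
              simp only [one_div]
              exact ENNReal.inv_ne_top.2 (zero_lt_one.trans hq1).ne'
            have := congrArg ENNReal.toReal hsum
            rwa [ENNReal.toReal_add h1p h1q, ENNReal.toReal_one, one_div, one_div,
              ENNReal.toReal_inv, ENNReal.toReal_inv] at this
        exact lp.tsum_mul_le_mul_norm hconj B x
      · -- p = 1, q = ∞
        subst hqtop
        have hpt1 : p.toReal = 1 := by rw [hp1]; simp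
        have hb_summ : Summable (fun j => ‖b j‖) := by
          have := hb.summable hpt
          simpa [hpt1] using this
        have hxj : ∀ j, ‖x j‖ ≤ ‖x‖ := fun j =>
          lp.norm_apply_le_norm ENNReal.top_ne_zero x j
        have hsum2 : Summable (fun j => ‖b j‖ * ‖x‖) := hb_summ.mul_right _
        have hsumm : Summable (fun j => ‖b j‖ * ‖x j‖) := by
          refine Summable.of_nonneg_of_le (fun j => by positivity) (fun j => ?_) hsum2
          exact mul_le_mul_of_nonneg_left (hxj j) (norm_nonneg _)
        refine ⟨hsumm, ?_⟩
        have hle : ∑' j, ‖b j‖ * ‖x j‖ ≤ ∑' j, ‖b j‖ * ‖x‖ :=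
          Summable.tsum_le_tsum (fun j => mul_le_mul_of_nonneg_left (hxj j) (norm_nonneg _))
            hsumm hsum2
        rw [tsum_mul_right] at hle
        have hBn : ‖B‖ = ∑' j, ‖b j‖ := by
          rw [lp.norm_eq_tsum_rpow hpt]
          simp [hpt1, hB_apply]
        rw [hBn]
        exact hle
    -- put everything together
    have hkey : (1 : ℝ) ≤ ‖B‖ * ‖x‖ := by
      have h1 : ∑' j : ℕ, (if r ≤ j then a j * x j else 0) = ∑' j, b j * x j := by
        refine tsum_congr fun j => ?_
        by_cases h : r ≤ j <;> simp [hb_def, h]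
      have hsn : Summable (fun j => ‖b j * x j‖) := by
        simpa only [norm_mul] using holder.1
      have h2 : ‖∑' j, b j * x j‖ ≤ ∑' j, ‖b j * x j‖ := norm_tsum_le_tsum_norm hsn
      have h3 : ∑' j, ‖b j * x j‖ = ∑' j, ‖b j‖ * ‖x j‖ := by
        simp only [norm_mul]
      calc (1 : ℝ) = ‖(1 : 𝕜)‖ := by simp
        _ = ‖∑' j, b j * x j‖ := by rw [← h1, hxr]
        _ ≤ ∑' j, ‖b j * x j‖ := h2
        _ = ∑' j, ‖b j‖ * ‖x j‖ := h3
        _ ≤ ‖B‖ * ‖x‖ := holder.2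
    rw [hB_norm] at hkey
    rw [← one_div, div_le_iff₀ (hT_pos r)]
    calc (1 : ℝ) ≤ tailNorm p a r * ‖x‖ := hkey
      _ = ‖x‖ * tailNorm p a r := mul_comm _ _
  -- Part 2 : the tail norms tend to zero
  have part2 : Filter.Tendsto (fun r : ℕ => tailNorm p a r) Filter.atTop (nhds 0) := by
    have hS : ∀ r : ℕ, (∑' j : ℕ, (if r ≤ j then g j else 0)) = ∑' k : ℕ, g (k + r) := by
      intro r
      have hinj : Function.Injective (fun k : ℕ => k + r) :=
        fun k₁ k₂ h => by simpa using h
      have hsupp : Function.support (fun j : ℕ => if r ≤ j then g j else 0)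
          ⊆ Set.range (fun k : ℕ => k + r) := by
        intro j hj
        simp only [Function.mem_support] at hj
        by_cases h : r ≤ j
        · exact ⟨j - r, by simp only []; omega⟩
        · simp [h] at hj
      have := hinj.tsum_eq hsupp
      rw [← this]
      refine tsum_congr fun k => ?_
      simp [Nat.le_add_left]
    have hS_tendsto : Filter.Tendsto (fun r : ℕ => ∑' j : ℕ, (if r ≤ j then g j else 0))
        Filter.atTop (nhds 0) := by
      simp only [hS]
      exact tendsto_sum_nat_add g
    have := hS_tendsto.rpow_const (p := 1 / p.toReal) (Or.inr (by positivity))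
    rw [Real.zero_rpow (by positivity : (1 : ℝ) / p.toReal ≠ 0)] at this
    refine this.congr fun r => ?_
    rw [hT_eq r]
  refine ⟨part1, part2, ?_⟩
  -- Part 3 : solutions blow up
  intro xs hxs
  have hlb : ∀ r : ℕ, (tailNorm p a r)⁻¹ ≤ ‖xs r‖ := fun r => part1 r (xs r) (hxs r)
  refine Filter.tendsto_atTop_mono hlb ?_
  refine Filter.Tendsto.inv_tendsto_nhdsGT_zero ?_
  exact tendsto_nhdsWithin_of_tendsto_nhds_of_eventually_within _ part2
    (Filter.Eventually.of_forall fun r => Set.mem_Ioi.2 (hT_pos r))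
end
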